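/- arXiv:2008.09432 — 8 statements merged into one kernel-verified Lean document; each statement's English description precedes it below -/
import Mathlib

section
/- Let X be an n×n integer matrix, Φ an m×m rational matrix, and A : ℤ^m → SL_n(ℤ) a group homomorphism such that for every v ∈ ℤ^m the matrix A(v) is net. Suppose that 1 is not an eigenvalue of Φ, and that there exists a positive integer k such that Φ·(k v) ∈ ℤ^m for all v ∈ ℤ^m and X·A(k v) = A(Φ·(k v))·X for all v ∈ ℤ^m. Then det(I − A(v)·X) = det(I − X) for all v ∈ ℤ^m. -/
/-- A complex square matrix is *net* if the multiplicative subgroup of `ℂˣ` generated by its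
complex eigenvalues contains no root of unity other than `1`. -/
def Matrix.IsNet {n : ℕ} (M : Matrix (Fin n) (Fin n) ℂ) : Prop :=
  ∀ u ∈ Subgroup.closure {u : ℂˣ | (u : ℂ) ∈ spectrum ℂ M},
    ∀ r : ℕ, 0 < r → u ^ r = 1 → u = 1

open Polynomial

namespace NetAux
noncomputable section


/-- Solve `α • Q(X+1) - β • Q = P` when `α ≠ β`. -/
lemma solveA {α β : ℂ} (hab : α ≠ β) (P : ℂ[X]) :
    ∃ Q : ℂ[X], α • Q.comp (X + 1) - β • Q = P := by
  suffices H : ∀ N (P : ℂ[X]), P.natDegree ≤ N → ∃ Q, α • Q.comp (X + 1) - β • Q = P by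
    exact H P.natDegree P le_rfl
  intro N
  induction N with
  | zero =>
    intro P hP
    refine ⟨C (P.coeff 0 / (α - β)), ?_⟩
    have : P = C (P.coeff 0) := (Polynomial.eq_C_of_natDegree_le_zero hP)
    rw [C_comp]
    rw [this]
    rw [smul_C, smul_C, ← C_sub]
    congr 1
    rw [coeff_C_zero]
    field_simp [sub_ne_zero.mpr hab]
    rw [smul_eq_mul, smul_eq_mul, ← mul_div_assoc, ← mul_div_assoc, div_sub_div_same, ← sub_mul,
      mul_div_cancel_left₀ _ (sub_ne_zero.mpr hab)]
  | succ N ih =>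
    intro P hP
    by_cases h0 : P.natDegree ≤ N
    · exact ih P h0
    have hd : P.natDegree = N + 1 := le_antisymm hP (by omega)
    set c : ℂ := P.leadingCoeff / (α - β) with hc
    set Q₀ : ℂ[X] := C c * X ^ (N + 1) with hQ₀
    have hcomp : Q₀.comp (X + 1) = C c * (X + 1) ^ (N + 1) := by
      rw [hQ₀, mul_comp, C_comp, pow_comp, X_comp]
    set T₀ : ℂ[X] := α • Q₀.comp (X + 1) - β • Q₀ with hT₀
    have hcoeff : ∀ m, N < m → (P - T₀).coeff m = 0 := by
      intro m hm
      have hm' : N + 1 ≤ m := hm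
      rcases eq_or_lt_of_le hm' with h | h
      · -- m = N + 1
        subst h
        simp only [coeff_sub, hT₀, hcomp, coeff_smul]
        rw [hQ₀]
        simp only [coeff_C_mul,
          coeff_X_add_one_pow, coeff_X_pow, Nat.choose_self, if_pos rfl]
        have hlc : P.coeff (N+1) = P.leadingCoeff := by rw [← hd]; rfl
        rw [hlc, hc]
        field_simp [sub_ne_zero.mpr hab]
        rw [Nat.cast_one, mul_one]
        rw [smul_eq_mul, smul_eq_mul, ← mul_div_assoc, ← mul_div_assoc, div_sub_div_same,
          if_pos trivial, mul_one, ← sub_mul, mul_div_cancel_left₀ _ (sub_ne_zero.mpr hab), sub_self]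
      · have h1 : P.coeff m = 0 := coeff_eq_zero_of_natDegree_lt (by omega)
        have h2 : ((X + 1 : ℂ[X]) ^ (N + 1)).coeff m = 0 := by
          rw [coeff_X_add_one_pow]
          norm_cast
          exact Nat.choose_eq_zero_of_lt h
        have h3 : ((X : ℂ[X]) ^ (N + 1)).coeff m = 0 := by
          rw [coeff_X_pow, if_neg (by omega)]
        simp [hT₀, hcomp, hQ₀, coeff_smul, coeff_C_mul, h1, h2, h3]
    have hdeg : (P - T₀).natDegree ≤ N := natDegree_le_iff_coeff_eq_zero.mpr hcoeff
    obtain ⟨Q₁, hQ₁⟩ := ih (P - T₀) hdeg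
    refine ⟨Q₀ + Q₁, ?_⟩
    rw [add_comp, smul_add, smul_add]
    have : α • Q₀.comp (X+1) + α • Q₁.comp (X+1) - (β • Q₀ + β • Q₁)
        = T₀ + (α • Q₁.comp (X+1) - β • Q₁) := by rw [hT₀]; ring
    rw [this, hQ₁]
    ring

/-- Solve `Q(X+1) - Q = P`, normalized with `Q.eval 0 = 0`. -/
lemma solveB (P : ℂ[X]) :
    ∃ Q : ℂ[X], Q.comp (X + 1) - Q = P ∧ Q.eval 0 = 0 := by
  suffices H : ∀ N (P : ℂ[X]), P.natDegree ≤ N → ∃ Q, Q.comp (X + 1) - Q = P by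
    obtain ⟨Q, hQ⟩ := H P.natDegree P le_rfl
    refine ⟨Q - C (Q.eval 0), ?_, by simp⟩
    rw [sub_comp, C_comp]
    rw [sub_sub_sub_comm, sub_self, sub_zero, hQ]
  intro N
  induction N with
  | zero =>
    intro P hP
    refine ⟨C (P.coeff 0) * X, ?_⟩
    have h : P = C (P.coeff 0) := Polynomial.eq_C_of_natDegree_le_zero hP
    rw [mul_comp, C_comp, X_comp]
    rw [show C (P.coeff 0) * (X + 1) - C (P.coeff 0) * X = C (P.coeff 0) by ring, ← h]
  | succ N ih =>
    intro P hP
    by_cases h0 : P.natDegree ≤ N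
    · exact ih P h0
    have hd : P.natDegree = N + 1 := le_antisymm hP (by omega)
    set c : ℂ := P.leadingCoeff / (N + 2) with hc
    set Q₀ : ℂ[X] := C c * X ^ (N + 2) with hQ₀
    have hcomp : Q₀.comp (X + 1) = C c * (X + 1) ^ (N + 2) := by
      rw [hQ₀, mul_comp, C_comp, pow_comp, X_comp]
    set T₀ : ℂ[X] := Q₀.comp (X + 1) - Q₀ with hT₀
    have hN2 : ((N : ℂ) + 2) ≠ 0 := by
      exact_mod_cast (by omega : (N + 2 : ℕ) ≠ 0)
    have hcoeff : ∀ m, N < m → (P - T₀).coeff m = 0 := by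
      intro m hm
      have hm' : N + 1 ≤ m := hm
      rcases eq_or_lt_of_le hm' with h | h
      · subst h
        simp only [coeff_sub, hT₀, hcomp]
        rw [hQ₀]
        simp only [coeff_C_mul,
          coeff_X_add_one_pow, coeff_X_pow, if_neg (by omega : ¬ (N+1 = N+2))]
        have hlc : P.coeff (N+1) = P.leadingCoeff := by rw [← hd]; rfl
        rw [hlc, hc]
        have hch : (N+2).choose (N+1) = N + 2 := by
          have := Nat.choose_succ_self_right (N+1)
          simpa using this
        rw [hch]
        push_cast
        field_simp
        ring
      · have h1 : P.coeff m = 0 := coeff_eq_zero_of_natDegree_lt (by omega)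
        rcases eq_or_lt_of_le (show N + 2 ≤ m by omega) with h2 | h2
        · subst h2
          simp [hT₀, hcomp, hQ₀, coeff_C_mul, coeff_X_add_one_pow, coeff_X_pow, h1]
        · have h2' : ((X + 1 : ℂ[X]) ^ (N + 2)).coeff m = 0 := by
            rw [coeff_X_add_one_pow]; norm_cast; exact Nat.choose_eq_zero_of_lt h2
          have h3 : ((X : ℂ[X]) ^ (N + 2)).coeff m = 0 := by
            rw [coeff_X_pow, if_neg (by omega)]
          simp [hT₀, hcomp, hQ₀, coeff_C_mul, h1, h2', h3]
    have hdeg : (P - T₀).natDegree ≤ N := natDegree_le_iff_coeff_eq_zero.mpr hcoeff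
    obtain ⟨Q₁, hQ₁⟩ := ih (P - T₀) hdeg
    refine ⟨Q₀ + Q₁, ?_⟩
    rw [add_comp]
    have : Q₀.comp (X+1) + Q₁.comp (X+1) - (Q₀ + Q₁) = T₀ + (Q₁.comp (X+1) - Q₁) := by
      rw [hT₀]; ring
    rw [this, hQ₁]
    ring


/-- Generators: polynomial-times-geometric sequences with ratio in `G`. -/
def gens (G : Subgroup ℂˣ) : Set (ℕ → ℂ) :=
  {f | ∃ P : ℂ[X], ∃ μ : ℂˣ, μ ∈ G ∧ f = fun j : ℕ => P.eval (j : ℂ) * (μ : ℂ) ^ j}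

/-- The space of exponential polynomials with bases in `G`. -/
def RR (G : Subgroup ℂˣ) : Submodule ℂ (ℕ → ℂ) := Submodule.span ℂ (gens G)

lemma gens_mul {G : Subgroup ℂˣ} {f g : ℕ → ℂ} (hf : f ∈ gens G) (hg : g ∈ gens G) :
    f * g ∈ gens G := by
  obtain ⟨P, μ, hμ, rfl⟩ := hf
  obtain ⟨Q, ν, hν, rfl⟩ := hg
  refine ⟨P * Q, μ * ν, mul_mem hμ hν, ?_⟩
  funext j
  simp [Pi.mul_apply, mul_pow]
  ring

lemma RR_mul_mem {G : Subgroup ℂˣ} {f g : ℕ → ℂ} (hf : f ∈ RR G) (hg : g ∈ RR G) :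
    f * g ∈ RR G := by
  have h1 : f * g ∈ RR G * RR G := Submodule.mul_mem_mul hf hg
  have h2 : RR G * RR G ≤ RR G := by
    rw [RR, Submodule.span_mul_span]
    apply Submodule.span_le.mpr
    intro x hx
    obtain ⟨f, hf, g, hg, rfl⟩ := Set.mem_mul.mp hx
    exact Submodule.subset_span (gens_mul hf hg)
  exact h2 h1

lemma RR_const_mem (G : Subgroup ℂˣ) (c : ℂ) : (fun _ : ℕ => c) ∈ RR G := by
  apply Submodule.subset_span
  exact ⟨C c, 1, one_mem G, by funext j; simp⟩

/-- The shift operator on sequences. -/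
def shiftE : Module.End ℂ (ℕ → ℂ) where
  toFun f := fun j => f (j + 1)
  map_add' f g := rfl
  map_smul' c f := rfl

lemma shiftE_pow (k : ℕ) (f : ℕ → ℂ) : (shiftE ^ k) f = fun j => f (j + k) := by
  induction k with
  | zero => simp [Module.End.one_apply]
  | succ k ih =>
    rw [pow_succ', Module.End.mul_apply, ih]
    funext j
    show (fun j => f (j + k)) (j + 1) = f (j + (k + 1))
    simp [add_assoc, add_comm 1 k]


/-- Summation against a geometric weight stays in `RR G`. -/
lemma RR_sum_mem (G : Subgroup ℂˣ) (lam : ℂˣ) (hlam : lam ∈ G) {h : ℕ → ℂ}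
    (hh : h ∈ RR G) :
    (fun j : ℕ => ∑ i ∈ Finset.range j, ((lam : ℂ)) ^ (j - 1 - i) * h i) ∈ RR G := by
  induction hh using Submodule.span_induction with
  | zero =>
    convert Submodule.zero_mem (RR G) using 1
    funext j; simp
  | add f g hf hg Hf Hg =>
    have : (fun j : ℕ => ∑ i ∈ Finset.range j, ((lam:ℂ)) ^ (j-1-i) * (f + g) i)
        = (fun j : ℕ => ∑ i ∈ Finset.range j, ((lam:ℂ)) ^ (j-1-i) * f i)
          + (fun j : ℕ => ∑ i ∈ Finset.range j, ((lam:ℂ)) ^ (j-1-i) * g i) := by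
      funext j
      simp [Pi.add_apply, mul_add, Finset.sum_add_distrib]
    rw [this]; exact Submodule.add_mem _ Hf Hg
  | smul c f hf Hf =>
    have : (fun j : ℕ => ∑ i ∈ Finset.range j, ((lam:ℂ)) ^ (j-1-i) * (c • f) i)
        = c • (fun j : ℕ => ∑ i ∈ Finset.range j, ((lam:ℂ)) ^ (j-1-i) * f i) := by
      funext j
      simp [Finset.mul_sum, Pi.smul_apply, smul_eq_mul]
      apply Finset.sum_congr rfl
      intro i _
      ring
    rw [this]; exact Submodule.smul_mem _ _ Hf
  | mem f hf =>
    obtain ⟨P, μ, hμ, rfl⟩ := hf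
    by_cases hem : μ = lam
    · subst hem
      obtain ⟨Q, hQ, hQ0⟩ := solveB P
      have key : (fun j : ℕ => ∑ i ∈ Finset.range j,
            ((μ:ℂ)) ^ (j-1-i) * (P.eval (i:ℂ) * (μ:ℂ)^i))
          = fun j : ℕ => ((μ⁻¹ : ℂˣ) • Q).eval (j:ℂ) * (μ:ℂ)^j := by
        funext j
        induction j with
        | zero => simp [hQ0]
        | succ j ih =>
          rw [Finset.sum_range_succ, show j+1-1-j = 0 by omega, pow_zero]
          have e1 : ∀ i, i < j → ((μ:ℂ)) ^ (j + 1 - 1 - i) = (μ:ℂ) * (μ:ℂ) ^ (j - 1 - i) := by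
            intro i hi
            have : j + 1 - 1 - i = (j - 1 - i) + 1 := by omega
            rw [this, pow_succ]
            ring
          rw [show (∑ i ∈ Finset.range j, ((μ:ℂ)) ^ (j+1-1-i) * (P.eval (i:ℂ) * (μ:ℂ)^i))
              = (μ:ℂ) * ∑ i ∈ Finset.range j, ((μ:ℂ)) ^ (j-1-i) * (P.eval (i:ℂ) * (μ:ℂ)^i) by
            rw [Finset.mul_sum]
            apply Finset.sum_congr rfl
            intro i hi
            rw [e1 i (Finset.mem_range.mp hi)]
            ring]
          rw [ih]
          have hQj : Q.eval ((j:ℂ)+1) - Q.eval (j:ℂ) = P.eval (j:ℂ) := by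
            have := congrArg (fun R => Polynomial.eval (j:ℂ) R) hQ
            simpa [eval_comp] using this
          have hj1 : ((j+1 : ℕ) : ℂ) = (j:ℂ) + 1 := by push_cast; ring
          simp only [hj1, eval_smul, Units.smul_def, smul_eq_mul, pow_succ]
          have hμne : (μ:ℂ) ≠ 0 := Units.ne_zero μ
          rw [Units.val_inv_eq_inv_val]
          rw [show P.eval (j:ℂ) = Q.eval ((j:ℂ)+1) - Q.eval (j:ℂ) from hQj.symm]
          field_simp
          ring
      rw [key]
      exact Submodule.subset_span ⟨(μ⁻¹:ℂˣ) • Q, μ, hμ, rfl⟩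
    · obtain ⟨Q, hQ⟩ := solveA (show (μ:ℂ) ≠ (lam:ℂ) by exact_mod_cast fun h => hem (Units.ext h)) P
      have key : (fun j : ℕ => ∑ i ∈ Finset.range j,
            ((lam:ℂ)) ^ (j-1-i) * (P.eval (i:ℂ) * (μ:ℂ)^i))
          = (fun j : ℕ => (C (-(Q.eval 0))).eval (j:ℂ) * (lam:ℂ)^j)
            + (fun j : ℕ => Q.eval (j:ℂ) * (μ:ℂ)^j) := by
        funext j
        induction j with
        | zero => simp
        | succ j ih =>
          rw [Finset.sum_range_succ, show j+1-1-j = 0 by omega, pow_zero]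
          have e1 : ∀ i, i < j → ((lam:ℂ)) ^ (j + 1 - 1 - i) = (lam:ℂ) * (lam:ℂ) ^ (j - 1 - i) := by
            intro i hi
            have : j + 1 - 1 - i = (j - 1 - i) + 1 := by omega
            rw [this, pow_succ]; ring
          rw [show (∑ i ∈ Finset.range j, ((lam:ℂ)) ^ (j+1-1-i) * (P.eval (i:ℂ) * (μ:ℂ)^i))
              = (lam:ℂ) * ∑ i ∈ Finset.range j, ((lam:ℂ)) ^ (j-1-i) * (P.eval (i:ℂ) * (μ:ℂ)^i) by
            rw [Finset.mul_sum]
            apply Finset.sum_congr rfl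
            intro i hi
            rw [e1 i (Finset.mem_range.mp hi)]
            ring]
          rw [ih]
          have hQj : (μ:ℂ) * Q.eval ((j:ℂ)+1) - (lam:ℂ) * Q.eval (j:ℂ) = P.eval (j:ℂ) := by
            have := congrArg (fun R => Polynomial.eval (j:ℂ) R) hQ
            simpa [eval_comp, smul_eq_mul] using this
          have hj1 : ((j+1 : ℕ) : ℂ) = (j:ℂ) + 1 := by push_cast; ring
          simp only [hj1, Pi.add_apply, eval_C, pow_succ]
          have hμne : (μ:ℂ) ≠ 0 := Units.ne_zero μ
          -- goal : lam * (prev) + P(j) μ^j = -Q(0) * (lam^j * lam) + Q(j+1) * (μ^j * μ)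
          have : P.eval (j:ℂ) = (μ:ℂ) * Q.eval ((j:ℂ)+1) - (lam:ℂ) * Q.eval (j:ℂ) := hQj.symm
          rw [this]
          ring
      rw [key]
      exact Submodule.add_mem _
        (Submodule.subset_span ⟨C (-(Q.eval 0)), lam, hlam, rfl⟩)
        (Submodule.subset_span ⟨Q, μ, hμ, rfl⟩)

/-- Sequences annihilated by `∏ (shift - λ)` with all `λ` units in `G` lie in `RR G`. -/
lemma sol (G : Subgroup ℂˣ) (L : Multiset ℂ)
    (hL : ∀ x ∈ L, ∃ u : ℂˣ, (u : ℂ) = x ∧ u ∈ G) (g : ℕ → ℂ)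
    (hg : (Polynomial.aeval shiftE ((L.map fun x => X - C x).prod)) g = 0) : g ∈ RR G := by
  induction L using Multiset.induction generalizing g with
  | empty =>
    simp only [Multiset.map_zero, Multiset.prod_zero, map_one, Module.End.one_apply] at hg
    rw [hg]; exact Submodule.zero_mem _
  | cons lam L ih =>
    obtain ⟨u, hu, huG⟩ := hL lam (Multiset.mem_cons_self _ _)
    have hL' : ∀ x ∈ L, ∃ u : ℂˣ, (u : ℂ) = x ∧ u ∈ G := fun x hx => hL x (Multiset.mem_cons_of_mem hx)
    have hfact : ((lam ::ₘ L).map fun x => X - C x).prod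
        = ((L.map fun x => X - C x).prod) * (X - C lam) := by
      rw [Multiset.map_cons, Multiset.prod_cons, mul_comm]
    rw [hfact, map_mul, Module.End.mul_apply] at hg
    set h : ℕ → ℂ := (Polynomial.aeval shiftE (X - C lam)) g with hh
    have hmem : h ∈ RR G := ih hL' h hg
    have hhval : ∀ j, h j = g (j+1) - lam * g j := by
      intro j
      rw [hh]
      simp only [map_sub, aeval_X, aeval_C, LinearMap.sub_apply, Pi.sub_apply]
      have h1 : shiftE g j = g (j+1) := rfl
      have h2 : ((algebraMap ℂ (Module.End ℂ (ℕ → ℂ))) lam) g j = lam * g j := rfl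
      rw [h1, h2]
    have key : g = (fun j : ℕ => (C (g 0)).eval (j:ℂ) * (u:ℂ)^j)
        + (fun j : ℕ => ∑ i ∈ Finset.range j, ((u : ℂ)) ^ (j - 1 - i) * h i) := by
      funext j
      induction j with
      | zero => simp
      | succ j ihj =>
        have hsum : (∑ i ∈ Finset.range (j+1), ((u:ℂ)) ^ (j+1-1-i) * h i)
            = (u:ℂ) * (∑ i ∈ Finset.range j, ((u:ℂ)) ^ (j-1-i) * h i) + h j := by
          rw [Finset.sum_range_succ, show j+1-1-j = 0 by omega, pow_zero, Finset.mul_sum]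
          congr 1
          · apply Finset.sum_congr rfl
            intro i hi
            rw [show j+1-1-i = (j-1-i)+1 by
              have := Finset.mem_range.mp hi; omega, pow_succ]
            ring
          · ring
        simp only [Pi.add_apply] at ihj ⊢
        rw [hsum, hhval j]
        have hgj : g (j+1) = lam * g j + (g (j+1) - lam * g j) := by ring
        rw [hgj, ihj]
        simp only [eval_C, pow_succ, hu]
        ring
    rw [key]
    exact Submodule.add_mem _
      (Submodule.subset_span ⟨C (g 0), u, huG, rfl⟩)
      (RR_sum_mem G u huG hmem)

/-- `aeval` of the shift on matrix-power entry sequences. -/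
lemma aeval_shift {n : ℕ} (B : Matrix (Fin n) (Fin n) ℂ) (a b : Fin n) (q : ℂ[X]) :
    (Polynomial.aeval shiftE q) (fun j : ℕ => (B ^ j) a b)
      = fun j : ℕ => (B ^ j * (Polynomial.aeval B q)) a b := by
  induction q using Polynomial.induction_on' with
  | add p q hp hq =>
    rw [map_add, map_add, LinearMap.add_apply, hp, hq]
    funext j
    simp [Matrix.mul_add, Matrix.add_apply]
  | monomial k c =>
    rw [aeval_monomial, aeval_monomial]
    funext j
    rw [Module.End.mul_apply, shiftE_pow]
    have h1 : ((algebraMap ℂ (Module.End ℂ (ℕ → ℂ))) c) (fun j : ℕ => (B ^ (j + k)) a b) j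
        = c * (B ^ (j+k)) a b := rfl
    rw [h1]
    have h2 : (algebraMap ℂ (Matrix (Fin n) (Fin n) ℂ)) c = c • (1 : Matrix (Fin n) (Fin n) ℂ) :=
      Algebra.algebraMap_eq_smul_one c
    rw [h2]
    rw [smul_mul_assoc, one_mul, Matrix.mul_smul, Matrix.smul_apply, ← pow_add]
    simp [smul_eq_mul]

/-- Evaluation of the characteristic polynomial. -/
lemma charpoly_eval {n : ℕ} (M : Matrix (Fin n) (Fin n) ℂ) (x : ℂ) :
    M.charpoly.eval x = (Matrix.scalar (Fin n) x - M).det := by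
  rw [Matrix.charpoly, eval_det, Matrix.matPolyEquiv_charmatrix]
  congr 1
  rw [eval_sub, eval_X, eval_C]

lemma root_mem_spectrum {n : ℕ} (M : Matrix (Fin n) (Fin n) ℂ) (x : ℂ)
    (hx : M.charpoly.IsRoot x) : x ∈ spectrum ℂ M := by
  rw [spectrum.mem_iff]
  intro hunit
  have hdet : (Matrix.scalar (Fin n) x - M).det = 0 := by
    rw [← charpoly_eval]; exact hx
  have : IsUnit (Matrix.scalar (Fin n) x - M) := by
    convert hunit using 2
    rfl
  rw [Matrix.isUnit_iff_isUnit_det, hdet] at this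
  exact (by simpa using this : False)

/-- Entries of matrix powers are exponential polynomials with bases among eigenvalues. -/
lemma entry_mem {n : ℕ} (B : Matrix (Fin n) (Fin n) ℂ) (hdet : B.det = 1)
    (G : Subgroup ℂˣ) (hG : ∀ u : ℂˣ, (u : ℂ) ∈ spectrum ℂ B → u ∈ G) (a b : Fin n) :
    (fun j : ℕ => (B ^ j) a b) ∈ RR G := by
  have hBunit : IsUnit B := by
    rw [Matrix.isUnit_iff_isUnit_det, hdet]; exact isUnit_one
  have hmonic := B.charpoly_monic
  have hsplit : B.charpoly.Splits := IsAlgClosed.splits _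
  have hfact := hsplit.eq_prod_roots_of_monic hmonic
  apply sol G B.charpoly.roots
  · intro x hx
    have hroot : B.charpoly.IsRoot x := ((Polynomial.mem_roots hmonic.ne_zero).mp hx)
    have hspec := root_mem_spectrum B x hroot
    have hx0 : x ≠ 0 := by
      rintro rfl
      rw [spectrum.zero_mem_iff] at hspec
      exact hspec hBunit
    exact ⟨Units.mk0 x hx0, rfl, hG _ hspec⟩
  · rw [← hfact, aeval_shift, Matrix.aeval_self_charpoly]
    funext j
    simp

/-- Determinants of matrices of sequences in `RR G` are in `RR G`. -/
lemma det_mem {n : ℕ} (G : Subgroup ℂˣ) (M : ℕ → Matrix (Fin n) (Fin n) ℂ)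
    (h : ∀ a b, (fun j => M j a b) ∈ RR G) :
    (fun j => (M j).det) ∈ RR G := by
  have key : (fun j => (M j).det)
      = ∑ σ : Equiv.Perm (Fin n),
          (((Equiv.Perm.sign σ : ℤ) : ℂ)) • fun j => ∏ i, M j (σ i) i := by
    funext j
    rw [Finset.sum_apply]
    rw [Matrix.det_apply]
    apply Finset.sum_congr rfl
    intro σ _
    simp only [Pi.smul_apply, smul_eq_mul]
    rw [show ∀ z : ℤˣ, ∀ x : ℂ, z • x = ((z : ℤ) : ℂ) * x from fun z x => by
      rw [Units.smul_def, zsmul_eq_mul]]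
  rw [key]
  apply Submodule.sum_mem
  intro σ _
  apply Submodule.smul_mem
  have : ∀ s : Finset (Fin n), (fun j => ∏ i ∈ s, M j (σ i) i) ∈ RR G := by
    intro s
    induction s using Finset.induction with
    | empty => simpa using RR_const_mem G 1
    | @insert a s ha ih =>
      have : (fun j => ∏ i ∈ insert a s, M j (σ i) i)
          = (fun j => M j (σ a) a) * (fun j => ∏ i ∈ s, M j (σ i) i) := by
        funext j
        rw [Finset.prod_insert ha]
        rfl
      rw [this]
      exact RR_mul_mem (h _ _) ih
  exact this Finset.univ

/-- Representation of elements of `RR G`. -/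
lemma rep {G : Subgroup ℂˣ} {f : ℕ → ℂ} (hf : f ∈ RR G) :
    ∃ (s : Finset ℂˣ) (Q : ℂˣ → ℂ[X]), (∀ μ ∈ s, μ ∈ G) ∧
      ∀ j : ℕ, f j = ∑ μ ∈ s, (Q μ).eval (j : ℂ) * (μ : ℂ) ^ j := by
  induction hf using Submodule.span_induction with
  | mem f hf =>
    obtain ⟨P, μ, hμ, rfl⟩ := hf
    exact ⟨{μ}, fun _ => P, by simpa using hμ, fun j => by simp⟩
  | zero => exact ⟨∅, fun _ => 0, by simp, fun j => by simp⟩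
  | add f g hf hg Hf Hg =>
    obtain ⟨s, Q, hsG, hQ⟩ := Hf
    obtain ⟨t, R, htG, hR⟩ := Hg
    refine ⟨s ∪ t,
      fun μ => (if μ ∈ s then Q μ else 0) + (if μ ∈ t then R μ else 0), ?_, ?_⟩
    · intro μ hμ
      rcases Finset.mem_union.mp hμ with h | h
      exacts [hsG μ h, htG μ h]
    · intro j
      have expand : ∀ μ : ℂˣ,
          (((if μ ∈ s then Q μ else 0) + (if μ ∈ t then R μ else 0)).eval (j:ℂ)) * (μ:ℂ)^j
          = (if μ ∈ s then (Q μ).eval (j:ℂ) * (μ:ℂ)^j else 0)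
            + (if μ ∈ t then (R μ).eval (j:ℂ) * (μ:ℂ)^j else 0) := by
        intro μ
        split_ifs <;> simp <;> ring
      simp only [Pi.add_apply, expand, Finset.sum_add_distrib]
      rw [Finset.sum_ite_mem, Finset.sum_ite_mem, Finset.union_inter_cancel_left,
        Finset.union_inter_cancel_right, hQ j, hR j]
  | smul c f hf Hf =>
    obtain ⟨s, Q, hsG, hQ⟩ := Hf
    refine ⟨s, fun μ => C c * Q μ, hsG, ?_⟩
    intro j
    simp only [Pi.smul_apply, smul_eq_mul, hQ j, Finset.mul_sum]
    apply Finset.sum_congr rfl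
    intro μ _
    simp
    ring

/-- A polynomial vanishing at all naturals is zero. -/
lemma poly_zero_of_nat_roots (P : ℂ[X]) (h : ∀ t : ℕ, P.eval (t : ℂ) = 0) : P = 0 := by
  apply Polynomial.eq_zero_of_infinite_isRoot
  apply Set.Infinite.mono (s := Set.range (Nat.cast : ℕ → ℂ))
  · rintro x ⟨t, rfl⟩; exact h t
  · exact Set.infinite_range_of_injective Nat.cast_injective

lemma natDegree_X_add_one : (X + 1 : ℂ[X]).natDegree = 1 := by
  simpa using Polynomial.natDegree_X_add_C (1:ℂ)

lemma leadingCoeff_X_add_one : (X + 1 : ℂ[X]).leadingCoeff = 1 := by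
  simpa using Polynomial.leadingCoeff_X_add_C (1:ℂ)

/-- One difference step reduces the degree (or kills the polynomial). -/
lemma step_deg {c₀ : ℂ} (hc₀ : c₀ ≠ 0) :
    ∀ k (R : ℂ[X]), R.natDegree < k →
      ((fun R : ℂ[X] => c₀ • (R.comp (X + 1) - R))^[k]) R = 0 := by
  have hT0 : ∀ k, ((fun R : ℂ[X] => c₀ • (R.comp (X + 1) - R))^[k]) 0 = 0 := by
    intro k
    induction k with
    | zero => rfl
    | succ k ih => rw [Function.iterate_succ_apply, show ((0:ℂ[X]).comp (X+1) - 0) = 0 by simp,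
        smul_zero, ih]
  intro k
  induction k with
  | zero => omega
  | succ k ih =>
    intro R hR
    rw [Function.iterate_succ_apply]
    set T := c₀ • (R.comp (X + 1) - R) with hT
    by_cases hTz : T = 0
    · rw [hTz]; exact hT0 k
    · apply ih
      have hsub : R.comp (X+1) - R ≠ 0 := by
        intro h
        rw [hT, h, smul_zero] at hTz; exact hTz rfl
      have hRz : R ≠ 0 := by rintro rfl; simp at hsub
      have hdeg0 : R.natDegree ≠ 0 := by
        intro h
        obtain ⟨a, rfl⟩ := Polynomial.natDegree_eq_zero.mp h
        simp at hsub
      have hcompdeg : (R.comp (X+1)).natDegree = R.natDegree := by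
        rw [Polynomial.natDegree_comp, natDegree_X_add_one, mul_one]
      have hcomplead : (R.comp (X+1)).leadingCoeff = R.leadingCoeff := by
        rw [Polynomial.leadingCoeff_comp (by rw [natDegree_X_add_one]; omega),
          leadingCoeff_X_add_one, one_pow, mul_one]
      have hcompz : R.comp (X+1) ≠ 0 := by
        intro h
        have := hcomplead
        rw [h] at this
        simp at this
        exact hRz (Polynomial.leadingCoeff_eq_zero.mp this.symm)
      have hdlt : (R.comp (X+1) - R).degree < R.degree := by
        have := Polynomial.degree_sub_lt
          (by rw [Polynomial.degree_eq_natDegree hcompz, Polynomial.degree_eq_natDegree hRz,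
                hcompdeg])
          hcompz hcomplead
        rwa [Polynomial.degree_eq_natDegree hcompz, hcompdeg,
          ← Polynomial.degree_eq_natDegree hRz] at this
      have hnat : (R.comp (X+1) - R).natDegree < R.natDegree :=
        Polynomial.natDegree_lt_natDegree hsub hdlt
      have : T.natDegree ≤ (R.comp (X+1) - R).natDegree := Polynomial.natDegree_smul_le _ _
      omega

/-- The degree-preserving operator is injective when bases differ. -/
lemma step_inj {β c₀ : ℂ} (hβ : β ≠ 0) (hne : β ≠ c₀) (R : ℂ[X])
    (h : β • R.comp (X + 1) - c₀ • R = 0) : R = 0 := by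
  by_contra hR
  have heq : C β * R.comp (X+1) = C c₀ * R := by
    have := sub_eq_zero.mp h
    rwa [Polynomial.smul_eq_C_mul, Polynomial.smul_eq_C_mul] at this
  have hcomplead : (R.comp (X+1)).leadingCoeff = R.leadingCoeff := by
    rw [Polynomial.leadingCoeff_comp (by rw [natDegree_X_add_one]; omega),
      leadingCoeff_X_add_one, one_pow, mul_one]
  have := congrArg Polynomial.leadingCoeff heq
  rw [Polynomial.leadingCoeff_mul, Polynomial.leadingCoeff_mul, Polynomial.leadingCoeff_C,
    hcomplead] at this
  have hlc : R.leadingCoeff ≠ 0 := Polynomial.leadingCoeff_ne_zero.mpr hR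
  rw [Polynomial.leadingCoeff_C] at this
  have hβc : β * R.leadingCoeff = c₀ * R.leadingCoeff := this
  exact hne (mul_right_cancel₀ hlc hβc)

/-- Linear independence of exponential polynomials with distinct unit bases. -/
lemma ind : ∀ (s : Finset ℂˣ) (b : ℂˣ → ℂˣ) (Q : ℂˣ → ℂ[X]),
    Set.InjOn b s →
    (∀ t : ℕ, ∑ μ ∈ s, (Q μ).eval (t : ℂ) * ((b μ : ℂ)) ^ t = 0) →
    ∀ μ ∈ s, Q μ = 0 := by
  intro s
  induction s using Finset.strongInduction with
  | _ s ih =>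
    intro b Q hinj hsum μ₀ hμ₀
    have hne : s.Nonempty := ⟨μ₀, hμ₀⟩
    obtain ⟨ν, hν⟩ := hne
    set c₀ : ℂ := (b ν : ℂ) with hc₀
    -- one simultaneous difference step
    set T : ℂˣ → ℂ[X] → ℂ[X] := fun μ R => (b μ : ℂ) • R.comp (X + 1) - c₀ • R with hTdef
    have step : ∀ (Q : ℂˣ → ℂ[X]),
        (∀ t : ℕ, ∑ μ ∈ s, (Q μ).eval (t : ℂ) * ((b μ : ℂ)) ^ t = 0) →
        (∀ t : ℕ, ∑ μ ∈ s, (T μ (Q μ)).eval (t : ℂ) * ((b μ : ℂ)) ^ t = 0) := by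
      intro Q hQ t
      have h1 := hQ (t + 1)
      have h2 := hQ t
      have expand : ∀ μ ∈ s, (T μ (Q μ)).eval (t:ℂ) * ((b μ : ℂ))^t
          = ((Q μ).eval ((t:ℂ)+1) * ((b μ : ℂ))^(t+1)) - c₀ * ((Q μ).eval (t:ℂ) * ((b μ : ℂ))^t) := by
        intro μ _
        rw [hTdef]
        simp only [eval_sub, eval_smul, eval_comp, eval_add, eval_X, eval_one, smul_eq_mul]
        rw [pow_succ]
        ring
      rw [Finset.sum_congr rfl expand, Finset.sum_sub_distrib]
      have hcast : ((t+1 : ℕ) : ℂ) = (t:ℂ) + 1 := by push_cast; ring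
      rw [← Finset.mul_sum, h2, mul_zero, sub_zero, ← h1, hcast]
    -- iterate
    set k₀ : ℕ := (Q ν).natDegree + 1 with hk₀
    have hiter : ∀ t : ℕ, ∑ μ ∈ s, (((T μ)^[k₀]) (Q μ)).eval (t : ℂ) * ((b μ : ℂ)) ^ t = 0 := by
      have : ∀ k, ∀ t : ℕ, ∑ μ ∈ s, (((T μ)^[k]) (Q μ)).eval (t : ℂ) * ((b μ : ℂ)) ^ t = 0 := by
        intro k
        induction k with
        | zero => simpa using hsum
        | succ k ihk =>
          have := step (fun μ => ((T μ)^[k]) (Q μ)) ihk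
          intro t
          have hrw : ∀ μ, T μ (((T μ)^[k]) (Q μ)) = ((T μ)^[k+1]) (Q μ) := by
            intro μ; rw [Function.iterate_succ_apply']
          simpa only [hrw] using this t
      exact this k₀
    -- the ν-term has been killed
    have hν0 : ((T ν)^[k₀]) (Q ν) = 0 := by
      have : T ν = fun R : ℂ[X] => c₀ • (R.comp (X + 1) - R) := by
        funext R
        rw [hTdef, smul_sub, hc₀]
      rw [this]
      exact step_deg (by simp [hc₀]) k₀ (Q ν) (by omega)
    have hother : ∀ μ ∈ s.erase ν, Q μ = 0 := by
      intro μ hμ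
      have herase := ih (s.erase ν) (Finset.erase_ssubset hν) b
        (fun μ => ((T μ)^[k₀]) (Q μ))
        (hinj.mono (by intro x hx; exact Finset.mem_of_mem_erase hx))
        (by
          intro t
          have := hiter t
          rw [← Finset.add_sum_erase _ _ hν, hν0] at this
          simpa using this)
        μ hμ
      have hbne : (b μ : ℂ) ≠ c₀ := by
        intro h
        exact (Finset.ne_of_mem_erase hμ) (hinj (Finset.mem_of_mem_erase hμ) hν (Units.ext h))
      have hinjT : ∀ R : ℂ[X], T μ R = 0 → R = 0 := fun R h =>
        step_inj (Units.ne_zero (b μ)) hbne R h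
      have hiterinj : ∀ k (R : ℂ[X]), ((T μ)^[k]) R = 0 → R = 0 := by
        intro k
        induction k with
        | zero => intro R h; exact h
        | succ k ihk =>
          intro R h
          rw [Function.iterate_succ_apply] at h
          exact hinjT R (ihk _ h)
      exact hiterinj k₀ _ herase
    by_cases hμν : μ₀ = ν
    · rw [hμν]
      have hQν : ∀ t : ℕ, (Q ν).eval (t:ℂ) * ((b ν : ℂ))^t = 0 := by
        intro t
        have := hsum t
        rw [← Finset.add_sum_erase _ _ hν] at this
        rw [Finset.sum_eq_zero (fun μ hμ => by rw [hother μ hμ]; simp)] at this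
        simpa using this
      apply poly_zero_of_nat_roots
      intro t
      have := hQν t
      have hb0 : ((b ν : ℂ))^t ≠ 0 := pow_ne_zero _ (Units.ne_zero _)
      exact (mul_eq_zero.mp this).resolve_right hb0
    · exact hother μ₀ (Finset.mem_erase.mpr ⟨hμν, hμ₀⟩)

/-- The core rigidity lemma over `ℂ`. -/
lemma core {n : ℕ} (B Xc : Matrix (Fin n) (Fin n) ℂ) (hdet : B.det = 1)
    (hnet : B.IsNet) (d : ℕ) (hd : 0 < d)
    (hF : ∀ t : ℕ, ((1 : Matrix (Fin n) (Fin n) ℂ) - B ^ (1 + t * d) * Xc).det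
      = ((1 : Matrix (Fin n) (Fin n) ℂ) - B * Xc).det) :
    ((1 : Matrix (Fin n) (Fin n) ℂ) - B * Xc).det
      = ((1 : Matrix (Fin n) (Fin n) ℂ) - Xc).det := by
  set G : Subgroup ℂˣ := Subgroup.closure {u : ℂˣ | (u : ℂ) ∈ spectrum ℂ B} with hG
  set F : ℕ → ℂ := fun j => ((1 : Matrix (Fin n) (Fin n) ℂ) - B ^ j * Xc).det with hFdef
  have hFmem : F ∈ RR G := by
    apply det_mem
    intro a b
    have : (fun j : ℕ => ((1 : Matrix (Fin n) (Fin n) ℂ) - B ^ j * Xc) a b)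
        = (fun _ : ℕ => (1 : Matrix (Fin n) (Fin n) ℂ) a b)
          - ∑ c : Fin n, (fun j : ℕ => (B ^ j) a c * Xc c b) := by
      funext j
      simp only [Matrix.sub_apply, Pi.sub_apply, Finset.sum_apply, Matrix.mul_apply]
    rw [this]
    apply Submodule.sub_mem
    · exact RR_const_mem G _
    · apply Submodule.sum_mem
      intro c _
      have : (fun j : ℕ => (B ^ j) a c * Xc c b)
          = (Xc c b) • (fun j : ℕ => (B ^ j) a c) := by
        funext j; simp [smul_eq_mul]; ring
      rw [this]
      exact Submodule.smul_mem _ _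
        (entry_mem B hdet G (fun u hu => Subgroup.subset_closure hu) a c)
  obtain ⟨s, Q, hsG, hQ⟩ := rep hFmem
  set c : ℂ := F 1 with hc
  -- prepare the independence input
  set s' : Finset ℂˣ := insert 1 s with hs'
  set Q' : ℂˣ → ℂ[X] := fun μ =>
    (if μ ∈ s then Q μ else 0) - (if μ = 1 then C c else 0) with hQ'
  set Qf : ℂˣ → ℂ[X] := fun μ =>
    C ((μ:ℂ)) * (Q' μ).comp (C 1 + (C (d:ℂ)) * X) with hQf
  have hs'G : ∀ μ ∈ s', μ ∈ G := by
    intro μ hμ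
    rcases Finset.mem_insert.mp hμ with h | h
    · rw [h]; exact one_mem G
    · exact hsG μ h
  have hinj : Set.InjOn (fun μ : ℂˣ => μ ^ d) s' := by
    intro μ hμ ν hν h
    have h1 : (μ * ν⁻¹) ^ d = 1 := by
      rw [mul_pow, inv_pow]
      simp only at h
      rw [h]
      simp
    have := hnet (μ * ν⁻¹) (mul_mem (hs'G μ hμ) (inv_mem (hs'G ν hν))) d hd h1
    have := mul_inv_eq_one.mp this
    exact this
  have hindsum : ∀ t : ℕ, ∑ μ ∈ s', (Qf μ).eval (t : ℂ) * (((μ ^ d : ℂˣ) : ℂ)) ^ t = 0 := by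
    intro t
    have hexp : ∀ μ ∈ s', (Qf μ).eval (t : ℂ) * (((μ ^ d : ℂˣ) : ℂ)) ^ t
        = (if μ ∈ s then (Q μ).eval ((1 + t*d : ℕ) : ℂ) * (μ:ℂ)^(1 + t*d) else 0)
          - (if μ = 1 then c else 0) := by
      intro μ hμ
      have hpow : (((μ ^ d : ℂˣ) : ℂ)) ^ t = (μ:ℂ)^(d*t) := by
        rw [Units.val_pow_eq_pow_val, ← pow_mul]
      have hcast : ((1 + d*t : ℕ) : ℂ) = 1 + (d:ℂ)*(t:ℂ) := by push_cast; ring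
      have hev : (Qf μ).eval (t:ℂ)
          = (μ:ℂ) * ((if μ ∈ s then Q μ else 0).eval (1 + (d:ℂ)*(t:ℂ))
              - (if μ = (1:ℂˣ) then C c else 0).eval (1 + (d:ℂ)*(t:ℂ))) := by
        rw [hQf, hQ']
        simp [eval_comp]
      have h1 : (μ:ℂ) * ((if μ ∈ s then Q μ else 0).eval (1 + (d:ℂ)*(t:ℂ))) * (μ:ℂ)^(d*t)
          = (if μ ∈ s then (Q μ).eval (1 + (d:ℂ)*(t:ℂ)) * (μ:ℂ)^(1+d*t) else 0) := by
        split_ifs with h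
        · rw [pow_add, pow_one]; ring
        · simp
      have h2 : (μ:ℂ) * ((if μ = (1:ℂˣ) then C c else 0).eval (1 + (d:ℂ)*(t:ℂ))) * (μ:ℂ)^(d*t)
          = (if μ = 1 then c else 0) := by
        split_ifs with h
        · rw [h]; simp
        · simp
      rw [hev, hpow]
      rw [show 1 + t*d = 1 + d*t by ring, hcast]
      calc (μ:ℂ) * ((if μ ∈ s then Q μ else 0).eval (1 + (d:ℂ)*(t:ℂ))
              - (if μ = (1:ℂˣ) then C c else 0).eval (1 + (d:ℂ)*(t:ℂ))) * (μ:ℂ)^(d*t)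
          = (μ:ℂ) * ((if μ ∈ s then Q μ else 0).eval (1 + (d:ℂ)*(t:ℂ))) * (μ:ℂ)^(d*t)
            - (μ:ℂ) * ((if μ = (1:ℂˣ) then C c else 0).eval (1 + (d:ℂ)*(t:ℂ))) * (μ:ℂ)^(d*t) := by
            ring
        _ = _ := by rw [h1, h2]
    rw [Finset.sum_congr rfl hexp, Finset.sum_sub_distrib]
    have e1 : ∑ μ ∈ s', (if μ ∈ s then (Q μ).eval ((1 + t*d : ℕ) : ℂ) * (μ:ℂ)^(1 + t*d) else 0)
        = F (1 + t*d) := by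
      rw [hQ (1 + t*d), Finset.sum_ite_mem,
        Finset.inter_eq_right.mpr (Finset.subset_insert 1 s)]
    have e2 : ∑ μ ∈ s', (if μ = (1:ℂˣ) then c else 0) = c := by
      rw [Finset.sum_ite_eq' s' (1:ℂˣ) (fun _ => c),
        if_pos (Finset.mem_insert_self 1 s)]
    rw [e1, e2]
    have : F (1 + t*d) = c := by
      rw [hc, hFdef]
      simpa [pow_one] using hF t
    rw [this, sub_self]
  have hQf0 := ind s' (fun μ => μ ^ d) Qf hinj hindsum
  -- recover the coefficients
  have hcomp_inj : ∀ p : ℂ[X], p.comp (C 1 + C (d:ℂ) * X) = 0 → p = 0 := by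
    intro p hp
    by_contra hp0
    have hdC : (d:ℂ) ≠ 0 := Nat.cast_ne_zero.mpr (by omega)
    have hq : (C 1 + C (d:ℂ) * X : ℂ[X]) = C (d:ℂ) * X + C 1 := by ring
    have hqdeg : (C 1 + C (d:ℂ) * X : ℂ[X]).natDegree = 1 := by
      rw [hq]; exact Polynomial.natDegree_linear hdC
    have hlc : (p.comp (C 1 + C (d:ℂ) * X)).leadingCoeff ≠ 0 := by
      rw [Polynomial.leadingCoeff_comp (by rw [hqdeg]; omega)]
      apply mul_ne_zero (Polynomial.leadingCoeff_ne_zero.mpr hp0)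
      apply pow_ne_zero
      rw [hq, Polynomial.leadingCoeff_linear hdC]
      exact hdC
    rw [hp] at hlc
    simp at hlc
  have hQ'0 : ∀ μ ∈ s', Q' μ = 0 := by
    intro μ hμ
    have := hQf0 μ hμ
    rw [hQf] at this
    rcases mul_eq_zero.mp this with h | h
    · exact absurd h (by simp [Units.ne_zero])
    · exact hcomp_inj _ h
  have hQzero : ∀ μ ∈ s, μ ≠ 1 → Q μ = 0 := by
    intro μ hμ hμ1
    have := hQ'0 μ (Finset.mem_insert_of_mem hμ)
    rw [hQ'] at this
    simpa [if_pos hμ, if_neg hμ1] using this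
  have hQ1 : (if (1:ℂˣ) ∈ s then Q 1 else 0) = C c := by
    have := hQ'0 1 (Finset.mem_insert_self 1 s)
    rw [hQ'] at this
    simpa [sub_eq_zero] using this
  have hF0 : F 0 = c := by
    rw [hQ 0]
    have : ∀ μ ∈ s, (Q μ).eval ((0:ℕ):ℂ) * (μ:ℂ)^(0:ℕ)
        = (if μ = 1 then (Q μ).eval 0 else 0) := by
      intro μ hμ
      by_cases h : μ = (1:ℂˣ)
      · rw [if_pos h]; simp
      · rw [if_neg h, hQzero μ hμ h]; simp
    rw [Finset.sum_congr rfl this, Finset.sum_ite_eq' s (1:ℂˣ)]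
    by_cases h1 : (1:ℂˣ) ∈ s
    · rw [if_pos h1]
      rw [if_pos h1] at hQ1
      rw [hQ1]
      simp
    · rw [if_neg h1]
      rw [if_neg h1] at hQ1
      have : c = 0 := by
        have := congrArg (fun p : ℂ[X] => p.coeff 0) hQ1
        simpa using this.symm
      rw [this]
  have hF1 : F 1 = ((1 : Matrix (Fin n) (Fin n) ℂ) - B * Xc).det := by
    rw [hFdef]; simp [pow_one]
  have hF0' : F 0 = ((1 : Matrix (Fin n) (Fin n) ℂ) - Xc).det := by
    rw [hFdef]; simp
  rw [← hF1, ← hF0', ← hc, hF0]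

end
end NetAux


/-- Let `X` be an `n×n` integer matrix, `Φ` an `m×m` rational matrix, and
`A : ℤ^m → SL_n(ℤ)` a group homomorphism such that every `A v` is net.  If `1` is not an
eigenvalue of `Φ`, and there is a positive integer `k` with `Φ·(k v) ∈ ℤ^m` for all `v` and
`X·A(k v) = A(Φ·(k v))·X` for all `v`, then `det(I − A(v)·X) = det(I − X)` for all `v ∈ ℤ^m`. -/
theorem det_one_sub_smul_eq_of_net {n m : ℕ}
    (X : Matrix (Fin n) (Fin n) ℤ) (Φ : Matrix (Fin m) (Fin m) ℚ)
    (A : (Fin m → ℤ) → Matrix (Fin n) (Fin n) ℤ)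
    (hA1 : A 0 = 1) (hAmul : ∀ v w, A (v + w) = A v * A w)
    (hAdet : ∀ v, (A v).det = 1)
    (hAnet : ∀ v, ((A v).map (Int.cast : ℤ → ℂ)).IsNet)
    (hΦ1 : (Φ - 1).det ≠ 0)
    (k : ℕ) (hk : 0 < k)
    (hΦint : ∀ v : Fin m → ℤ, ∃ w : Fin m → ℤ,
      Φ.mulVec (fun t => (((k : ℤ) * v t : ℤ) : ℚ)) = fun t => ((w t : ℤ) : ℚ))
    (hcomm : ∀ v w : Fin m → ℤ,
      (Φ.mulVec (fun t => (((k : ℤ) * v t : ℤ) : ℚ)) = fun t => ((w t : ℤ) : ℚ)) →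
      X * A ((k : ℤ) • v) = A w * X) :
    ∀ v : Fin m → ℤ, (1 - A v * X).det = (1 - X).det := by
  classical
  -- inverses of the A-values
  have hAinv : ∀ y : Fin m → ℤ, A (-y) * A y = 1 := by
    intro y
    rw [← hAmul, neg_add_cancel, hA1]
  have hAinv' : ∀ y : Fin m → ℤ, A y * A (-y) = 1 := by
    intro y
    rw [← hAmul, add_neg_cancel, hA1]
  -- choose the integer vector W v with cast W v = Φ (k v)
  set W : (Fin m → ℤ) → (Fin m → ℤ) := fun v => Classical.choose (hΦint v) with hW
  have hWspec : ∀ v, Φ.mulVec (fun t => (((k : ℤ) * v t : ℤ) : ℚ))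
      = fun t => ((W v t : ℤ) : ℚ) := fun v => Classical.choose_spec (hΦint v)
  set fdet : (Fin m → ℤ) → ℤ := fun y => (1 - A y * X).det with hfdet
  -- key conjugation identity
  have key1 : ∀ (x v : Fin m → ℤ), fdet (x + ((k:ℤ) • v - W v)) = fdet x := by
    intro x v
    have h1 : X * A ((k:ℤ) • v) = A (W v) * X := hcomm v (W v) (hWspec v)
    have h2 : A (-(W v)) * X = X * A (-((k:ℤ) • v)) := by
      calc A (-(W v)) * X
          = A (-(W v)) * X * (A ((k:ℤ) • v) * A (-((k:ℤ) • v))) := by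
            rw [hAinv' ((k:ℤ) • v), mul_one]
        _ = A (-(W v)) * (X * A ((k:ℤ) • v)) * A (-((k:ℤ) • v)) := by
            rw [← mul_assoc, mul_assoc (A (-(W v))) X (A ((k:ℤ) • v))]
        _ = A (-(W v)) * (A (W v) * X) * A (-((k:ℤ) • v)) := by rw [h1]
        _ = A (-(W v)) * A (W v) * X * A (-((k:ℤ) • v)) := by rw [← mul_assoc]
        _ = X * A (-((k:ℤ) • v)) := by rw [hAinv (W v), one_mul]
    have hmid : A ((k:ℤ) • v) * (A x * X) * A (-((k:ℤ) • v))
        = A (x + ((k:ℤ) • v - W v)) * X := by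
      calc A ((k:ℤ) • v) * (A x * X) * A (-((k:ℤ) • v))
          = A ((k:ℤ) • v) * A x * (X * A (-((k:ℤ) • v))) := by
            rw [← mul_assoc (A ((k:ℤ) • v)) (A x) X,
              mul_assoc (A ((k:ℤ) • v) * A x) X (A (-((k:ℤ) • v)))]
        _ = A ((k:ℤ) • v) * A x * (A (-(W v)) * X) := by rw [← h2]
        _ = A ((k:ℤ) • v + x + -(W v)) * X := by
            rw [← hAmul, ← mul_assoc, ← hAmul]
        _ = A (x + ((k:ℤ) • v - W v)) * X := by
            rw [show (k:ℤ) • v + x + -(W v) = x + ((k:ℤ) • v - W v) from by abel]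
    have conj : A ((k:ℤ) • v) * (1 - A x * X) * A (-((k:ℤ) • v))
        = 1 - A (x + ((k:ℤ) • v - W v)) * X := by
      rw [mul_sub, sub_mul, mul_one, hAinv' ((k:ℤ) • v), hmid]
    have hdet3 : (1 - A (x + ((k:ℤ) • v - W v)) * X).det
        = ((A ((k:ℤ) • v)).det * (1 - A x * X).det) * (A (-((k:ℤ) • v))).det := by
      rw [← conj, Matrix.det_mul, Matrix.det_mul]
    show (1 - A (x + ((k:ℤ) • v - W v)) * X).det = (1 - A x * X).det
    rw [hdet3, hAdet, hAdet, one_mul, mul_one]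
  have key1' : ∀ (x v : Fin m → ℤ), fdet (x + (W v - (k:ℤ) • v)) = fdet x := by
    intro x v
    have := key1 (x + (W v - (k:ℤ) • v)) v
    rw [show x + (W v - (k:ℤ) • v) + ((k:ℤ) • v - W v) = x by abel] at this
    exact this.symm
  -- the integer matrix of the map v ↦ W v - k v
  set Tfun : (Fin m → ℤ) → (Fin m → ℤ) := fun v => W v - (k:ℤ) • v with hTfun
  set Ψ : Matrix (Fin m) (Fin m) ℚ := (k:ℚ) • (Φ - 1) with hΨ
  have c1 : ∀ v : Fin m → ℤ, (fun i => ((Tfun v i : ℤ) : ℚ))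
      = Ψ.mulVec (fun i => ((v i : ℤ) : ℚ)) := by
    intro v
    funext i
    have hWQ : ((W v i : ℤ) : ℚ) = Φ.mulVec (fun t => (((k:ℤ) * v t : ℤ) : ℚ)) i :=
      (congrFun (hWspec v) i).symm
    have harg : (fun t => (((k:ℤ) * v t : ℤ) : ℚ)) = (k:ℚ) • (fun t => ((v t : ℤ) : ℚ)) := by
      funext t; push_cast; simp [smul_eq_mul]
    have : Ψ.mulVec (fun i => ((v i : ℤ) : ℚ))
        = (k:ℚ) • (Φ.mulVec fun i => ((v i : ℤ) : ℚ))
          - (k:ℚ) • (fun i => ((v i : ℤ) : ℚ)) := by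
      rw [hΨ, smul_sub, Matrix.sub_mulVec, Matrix.smul_mulVec,
        Matrix.smul_mulVec, Matrix.one_mulVec]
    rw [this]
    simp only [Pi.sub_apply, Pi.smul_apply, smul_eq_mul]
    rw [hTfun]
    simp only [Pi.sub_apply, Pi.smul_apply, smul_eq_mul]
    push_cast
    rw [hWQ, harg]
    rw [Matrix.mulVec_smul]
    simp only [Pi.smul_apply, smul_eq_mul]
    try ring
  set Mmat : Matrix (Fin m) (Fin m) ℤ := Matrix.of (fun i j => Tfun (Pi.single j 1) i) with hMmat
  have c2 : Mmat.map (Int.cast : ℤ → ℚ) = Ψ := by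
    ext i j
    have := congrFun (c1 (Pi.single j 1)) i
    rw [Matrix.map_apply, hMmat]
    rw [Matrix.of_apply, this]
    have hsingle : (fun i => (((Pi.single j 1 : Fin m → ℤ) i : ℤ) : ℚ)) = Pi.single j 1 := by
      funext t
      by_cases h : t = j
      · subst h; simp
      · simp [Pi.single_apply, h]
    rw [hsingle, Matrix.mulVec_single]
    simp
  have c3 : ∀ v, Tfun v = Mmat.mulVec v := by
    intro v
    funext i
    have hcast : ((Mmat.mulVec v i : ℤ) : ℚ) = ((Tfun v i : ℤ) : ℚ) := by
      rw [congrFun (c1 v) i]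
      rw [Matrix.mulVec, dotProduct]
      rw [show Ψ.mulVec (fun i => ((v i : ℤ) : ℚ)) i
          = ∑ j, Ψ i j * ((v j : ℤ) : ℚ) from rfl]
      push_cast
      apply Finset.sum_congr rfl
      intro j _
      rw [← c2, Matrix.map_apply]
      try push_cast
      try ring
    exact_mod_cast hcast.symm
  have c4 : Mmat.det ≠ 0 := by
    intro h
    have hdet0 : ((Mmat.det : ℤ) : ℚ) = Ψ.det := by
      rw [← c2]
      simpa using (RingHom.map_det (Int.castRingHom ℚ) Mmat)
    rw [h, hΨ, Matrix.det_smul] at hdet0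
    simp only [Int.cast_zero, Fintype.card_fin] at hdet0
    rcases (mul_eq_zero.mp hdet0.symm) with h' | h'
    · exact (pow_ne_zero m (Nat.cast_ne_zero.mpr (by omega) : (k:ℚ) ≠ 0)) h'
    · exact hΦ1 h'
  set d₀ : ℤ := Mmat.det with hd₀
  have c5 : ∀ u : Fin m → ℤ, Tfun (d₀ • Mmat.adjugate.mulVec u) = (d₀ * d₀) • u := by
    intro u
    rw [c3, Matrix.mulVec_smul, Matrix.mulVec_mulVec, Matrix.mul_adjugate, ← hd₀]
    funext i
    simp only [Matrix.smul_mulVec, Matrix.one_mulVec, Pi.smul_apply, smul_eq_mul]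
    ring
  set d : ℕ := (d₀ * d₀).toNat with hdnat
  have hdpos : 0 < d := by
    have : 0 < d₀ * d₀ := mul_self_pos.mpr c4
    omega
  have hdcast : ((d : ℕ) : ℤ) = d₀ * d₀ := by
    have : 0 < d₀ * d₀ := mul_self_pos.mpr c4
    rw [hdnat, Int.toNat_of_nonneg (le_of_lt this)]
  -- iterate: fdet ((1 + t*d) • u) = fdet u
  intro u
  have key2 : ∀ t : ℕ, fdet (((1 + t * d : ℕ) : ℤ) • u) = fdet u := by
    intro t
    induction t with
    | zero => simp
    | succ t iht =>
      have hsplit : ((1 + (t+1) * d : ℕ) : ℤ) • u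
          = ((1 + t * d : ℕ) : ℤ) • u + Tfun (d₀ • Mmat.adjugate.mulVec u) := by
        rw [c5, ← hdcast]
        push_cast
        rw [show ((1:ℤ) + ((t:ℤ)+1) * (d:ℤ)) = (1 + (t:ℤ)*(d:ℤ)) + (d:ℤ) by ring, add_smul]
      rw [hsplit]
      have hkey := key1' (((1 + t * d : ℕ) : ℤ) • u) (d₀ • Mmat.adjugate.mulVec u)
      rw [show Tfun (d₀ • Mmat.adjugate.mulVec u)
        = W (d₀ • Mmat.adjugate.mulVec u) - (k:ℤ) • (d₀ • Mmat.adjugate.mulVec u) from rfl]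
      rw [hkey, iht]
  -- convert to powers
  have hpow : ∀ c : ℕ, A ((c : ℤ) • u) = A u ^ c := by
    intro c
    induction c with
    | zero => simpa using hA1
    | succ c ihc =>
      have : ((c+1 : ℕ) : ℤ) • u = u + (c : ℤ) • u := by
        push_cast
        rw [add_smul, one_smul, add_comm]
      rw [this, hAmul, ihc, pow_succ']
  -- cast everything to ℂ
  set B : Matrix (Fin n) (Fin n) ℂ := (A u).map (Int.cast : ℤ → ℂ) with hB
  set Xc : Matrix (Fin n) (Fin n) ℂ := X.map (Int.cast : ℤ → ℂ) with hXc
  have hmap : ∀ M : Matrix (Fin n) (Fin n) ℤ, M.map (Int.cast : ℤ → ℂ) = (Int.castRingHom ℂ).mapMatrix M := by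
    intro M; rfl
  have hcastdet : ∀ (y : Fin m → ℤ) (c : ℕ), A y = A u ^ c →
      (((1 - A y * X).det : ℤ) : ℂ) = ((1 : Matrix (Fin n) (Fin n) ℂ) - B ^ c * Xc).det := by
    intro y c hy
    rw [show (((1 - A y * X).det : ℤ) : ℂ) = (Int.castRingHom ℂ) ((1 - A y * X).det) from rfl]
    rw [RingHom.map_det]
    congr 1
    rw [hy, map_sub, map_one, map_mul, map_pow, RingHom.mapMatrix_apply,
      RingHom.mapMatrix_apply, Int.coe_castRingHom, ← hB, ← hXc]
  have hFhyp : ∀ t : ℕ, ((1 : Matrix (Fin n) (Fin n) ℂ) - B ^ (1 + t * d) * Xc).det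
      = ((1 : Matrix (Fin n) (Fin n) ℂ) - B * Xc).det := by
    intro t
    have h1 := hcastdet (((1 + t * d : ℕ) : ℤ) • u) (1 + t * d) (hpow (1 + t*d))
    have h2 := hcastdet u 1 (pow_one (A u)).symm
    rw [pow_one] at h2
    rw [← h1, ← h2]
    have := key2 t
    rw [show fdet (((1 + t * d : ℕ) : ℤ) • u) = (1 - A (((1 + t * d : ℕ) : ℤ) • u) * X).det
      from rfl, show fdet u = (1 - A u * X).det from rfl] at this
    exact_mod_cast congrArg (fun z : ℤ => ((z : ℤ) : ℂ)) this
  have hdet1 : B.det = 1 := by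
    have hmd := RingHom.map_det (Int.castRingHom ℂ) (A u)
    rw [RingHom.mapMatrix_apply, Int.coe_castRingHom] at hmd
    rw [hB, ← hmd, hAdet u]
    simp
  have hcore := NetAux.core B Xc hdet1 (hAnet u) d hdpos hFhyp
  -- conclude
  have h1 := hcastdet u 1 (pow_one (A u)).symm
  rw [pow_one] at h1
  have h0 : (((1 - X).det : ℤ) : ℂ) = ((1 : Matrix (Fin n) (Fin n) ℂ) - Xc).det := by
    rw [show (((1 - X).det : ℤ) : ℂ) = (Int.castRingHom ℂ) ((1 - X).det) from rfl, RingHom.map_det]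
    congr 1
    rw [map_sub, map_one, RingHom.mapMatrix_apply, Int.coe_castRingHom, ← hXc]
  have : (((1 - A u * X).det : ℤ) : ℂ) = (((1 - X).det : ℤ) : ℂ) := by
    rw [h1, h0]
    exact hcore
  exact_mod_cast this
end

section
/- Let U be an invertible n×n rational matrix that is unipotent, let M be an n×n complex matrix, and let d be a positive integer. If det(I − U^{d z}·M) = det(I − M) for every integer z, then det(I − U^{z}·M) = det(I − M) for every integer z. -/
open Polynomial Finset

section Aux

private lemma smeval_int_eq_eval (p : ℤ[X]) (z : ℚ) :
    p.smeval z = (p.map (Int.castRingHom ℚ)).eval z := by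
  rw [eval_eq_smeval]
  induction p using Polynomial.induction_on' with
  | monomial k a => simp [smeval_monomial, zsmul_eq_mul]
  | add p q hp hq => simp [smeval_add, hp, hq]

private lemma choose_eq_desc (z : ℚ) (k : ℕ) :
    Ring.choose z k = ((k.factorial : ℚ))⁻¹ * (descPochhammer ℚ k).eval z := by
  have h := Ring.descPochhammer_eq_factorial_smul_choose (R := ℚ) z k
  rw [smeval_int_eq_eval, descPochhammer_map] at h
  rw [h, nsmul_eq_mul]
  rw [inv_mul_cancel_left₀ (by exact_mod_cast k.factorial_ne_zero)]

private lemma choose_cast (w : ℤ) (k : ℕ) :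
    ((Ring.choose (w : ℚ) k : ℚ) : ℂ)
      = ((k.factorial : ℂ))⁻¹ * (descPochhammer ℂ k).eval (w : ℂ) := by
  have h1 : ((((descPochhammer ℚ k).eval ((w : ℤ) : ℚ)) : ℚ) : ℂ)
      = (descPochhammer ℂ k).eval ((w : ℤ) : ℂ) := by
    calc (((descPochhammer ℚ k).eval ((w : ℤ) : ℚ) : ℚ) : ℂ)
        = algebraMap ℚ ℂ ((descPochhammer ℚ k).eval ((w : ℤ) : ℚ)) := (eq_ratCast _ _).symm
      _ = eval₂ (algebraMap ℚ ℂ) (algebraMap ℚ ℂ ((w : ℤ) : ℚ)) (descPochhammer ℚ k) :=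
          (eval₂_at_apply _ _).symm
      _ = ((descPochhammer ℚ k).map (algebraMap ℚ ℂ)).eval (algebraMap ℚ ℂ ((w : ℤ) : ℚ)) :=
          (eval_map _ _).symm
      _ = (descPochhammer ℂ k).eval ((w : ℤ) : ℂ) := by
          rw [descPochhammer_map, eq_ratCast]
          push_cast
          rfl
  rw [choose_eq_desc, Rat.cast_mul, h1]
  push_cast
  ring

private lemma zpow_eq_sum {n : ℕ} (U : (Matrix (Fin n) (Fin n) ℚ)ˣ)
    (hU : ((U : Matrix (Fin n) (Fin n) ℚ) - 1) ^ n = 0) (z : ℤ) :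
    ((U ^ z : (Matrix (Fin n) (Fin n) ℚ)ˣ) : Matrix (Fin n) (Fin n) ℚ)
      = ∑ k ∈ range n, Ring.choose (z : ℚ) k • ((U : Matrix (Fin n) (Fin n) ℚ) - 1) ^ k := by
  rcases Nat.eq_zero_or_pos n with hn | hn
  · subst hn; exact Subsingleton.elim _ _
  obtain ⟨m, rfl⟩ : ∃ m, n = m + 1 := ⟨n - 1, by omega⟩
  set N : Matrix (Fin (m+1)) (Fin (m+1)) ℚ := (U : Matrix (Fin (m+1)) (Fin (m+1)) ℚ) - 1 with hNdef
  let W : ℤ → Matrix (Fin (m+1)) (Fin (m+1)) ℚ :=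
    fun z => ∑ k ∈ range (m+1), Ring.choose (z : ℚ) k • N ^ k
  have hWapp : ∀ w : ℤ, W w = ∑ k ∈ range (m+1), Ring.choose (w : ℚ) k • N ^ k := fun _ => rfl
  have hUval : (U : Matrix (Fin (m+1)) (Fin (m+1)) ℚ) = 1 + N := by
    rw [hNdef]; abel
  have hW0 : W 0 = 1 := by
    rw [hWapp]
    push_cast
    rw [Finset.sum_eq_single 0]
    · simp
    · intro k _ hk
      rw [Ring.choose_zero_ite]
      simp [hk]
    · simp
  have hstep : ∀ w : ℤ, W (w + 1) = (U : Matrix (Fin (m+1)) (Fin (m+1)) ℚ) * W w := by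
    intro w
    have hNW : N * W w = ∑ k ∈ range m, Ring.choose (w : ℚ) k • N ^ (k + 1) := by
      rw [hWapp, Finset.mul_sum]
      rw [Finset.sum_range_succ]
      rw [mul_smul_comm, ← pow_succ', hU, smul_zero, add_zero]
      exact Finset.sum_congr rfl fun k _ => by rw [mul_smul_comm, ← pow_succ']
    have hWw : W w = (∑ k ∈ range m, Ring.choose (w : ℚ) (k + 1) • N ^ (k + 1))
        + Ring.choose (w : ℚ) 0 • N ^ 0 := Finset.sum_range_succ' _ m
    have hWw1 : W (w + 1) = (∑ k ∈ range m, Ring.choose ((w : ℚ) + 1) (k + 1) • N ^ (k + 1))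
        + Ring.choose ((w : ℚ) + 1) 0 • N ^ 0 := by
      have := Finset.sum_range_succ' (fun k => Ring.choose (((w + 1 : ℤ)) : ℚ) k • N ^ k) m
      rw [hWapp]
      push_cast at this ⊢
      exact this
    rw [hUval, add_mul, one_mul, hNW, hWw1, hWw]
    simp only [Ring.choose_succ_succ, Ring.choose_zero_right, add_smul]
    rw [Finset.sum_add_distrib]
    abel
  have main : ∀ w : ℤ, ((U ^ w : (Matrix (Fin (m+1)) (Fin (m+1)) ℚ)ˣ) :
      Matrix (Fin (m+1)) (Fin (m+1)) ℚ) = W w := by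
    intro w
    induction w using Int.induction_on with
    | zero => rw [hW0]; simp
    | succ i ih =>
      have h1 : (U ^ ((i : ℤ) + 1)) = U ^ (i : ℤ) * U := by rw [zpow_add_one]
      rw [h1, hstep, Units.val_mul, ih]
      have hcomm : (U : Matrix (Fin (m+1)) (Fin (m+1)) ℚ) * W i = W i * U := by
        rw [hUval, hWapp]
        rw [Finset.sum_mul, Finset.mul_sum]
        refine Finset.sum_congr rfl fun k _ => ?_
        rw [smul_mul_assoc, mul_smul_comm]
        congr 1
        rw [add_mul, mul_add, one_mul, mul_one, ← pow_succ, ← pow_succ']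
      rw [← hcomm]
    | pred i ih =>
      have h1 : (U ^ (-(i : ℤ) - 1)) = U⁻¹ * U ^ (-(i : ℤ)) := by
        rw [← zpow_neg_one, ← zpow_add]
        ring_nf
      rw [h1, Units.val_mul, ih]
      have h2 := hstep (-(i : ℤ) - 1)
      rw [sub_add_cancel] at h2
      rw [h2, ← mul_assoc, ← Units.val_mul]
      simp
  rw [main z, hWapp]

end Aux

/-- Let `U` be an invertible unipotent `n×n` rational matrix, `M` an `n×n` complex matrix and
`d` a positive integer.  If `det(I − U^{dz}·M) = det(I − M)` for every integer `z`, then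
`det(I − U^{z}·M) = det(I − M)` for every integer `z`. -/
theorem det_one_sub_zpow_mul_of_unipotent {n : ℕ}
    (U : (Matrix (Fin n) (Fin n) ℚ)ˣ)
    (hU : ((U : Matrix (Fin n) (Fin n) ℚ) - 1) ^ n = 0)
    (M : Matrix (Fin n) (Fin n) ℂ) (d : ℕ) (hd : 0 < d)
    (h : ∀ z : ℤ,
      (1 - ((U ^ ((d : ℤ) * z) : (Matrix (Fin n) (Fin n) ℚ)ˣ) :
        Matrix (Fin n) (Fin n) ℚ).map (Rat.cast : ℚ → ℂ) * M).det = (1 - M).det) :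
    ∀ z : ℤ,
      (1 - ((U ^ z : (Matrix (Fin n) (Fin n) ℚ)ˣ) :
        Matrix (Fin n) (Fin n) ℚ).map (Rat.cast : ℚ → ℂ) * M).det = (1 - M).det := by
  classical
  set N : Matrix (Fin n) (Fin n) ℚ := (U : Matrix (Fin n) (Fin n) ℚ) - 1 with hNdef
  set A : Matrix (Fin n) (Fin n) ℂ[X] :=
    1 - (∑ k ∈ range n, (((k.factorial : ℂ))⁻¹ • descPochhammer ℂ k) •
          (N ^ k).map (fun q => C ((q : ℚ) : ℂ))) * M.map C with hAdef
  set p : ℂ[X] := A.det with hpdef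
  have key : ∀ w : ℤ,
      (1 - ((U ^ w : (Matrix (Fin n) (Fin n) ℚ)ˣ) :
        Matrix (Fin n) (Fin n) ℚ).map (Rat.cast : ℚ → ℂ) * M).det = p.eval (w : ℂ) := by
    intro w
    have hdet : p.eval (w : ℂ) = (A.map (evalRingHom (w : ℂ))).det := by
      rw [hpdef]
      exact RingHom.map_det (evalRingHom (w : ℂ)) A
    rw [hdet]
    congr 1
    rw [zpow_eq_sum U hU w, ← hNdef]
    ext i j
    simp only [hAdef, Matrix.map_apply, Matrix.sub_apply, Matrix.mul_apply, Matrix.sum_apply,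
      Matrix.smul_apply, Matrix.one_apply, coe_evalRingHom, eval_sub, eval_one, eval_finset_sum,
      eval_mul, eval_smul, eval_C, smul_eq_mul, apply_ite (eval ((w : ℤ) : ℂ)), eval_zero]
    congr 1
    refine Finset.sum_congr rfl fun l _ => ?_
    congr 1
    rw [Rat.cast_sum]
    refine Finset.sum_congr rfl fun k _ => ?_
    rw [Rat.cast_mul, choose_cast]
  have hroots : ∀ z : ℤ, (p - C (1 - M).det).eval ((d : ℂ) * (z : ℂ)) = 0 := by
    intro z
    have h1 := h z
    rw [key ((d : ℤ) * z)] at h1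
    have h2 : (((d : ℤ) * z : ℤ) : ℂ) = (d : ℂ) * (z : ℂ) := by push_cast; ring
    rw [h2] at h1
    simp [h1]
  have hinj : Function.Injective (fun z : ℤ => (d : ℂ) * (z : ℂ)) := by
    intro a b hab
    have hd0 : (d : ℂ) ≠ 0 := by exact_mod_cast hd.ne'
    have : (a : ℂ) = (b : ℂ) := mul_left_cancel₀ hd0 hab
    exact_mod_cast this
  have hzero : p - C (1 - M).det = 0 := by
    apply Polynomial.eq_zero_of_infinite_isRoot
    apply Set.Infinite.mono (s := Set.range (fun z : ℤ => (d : ℂ) * (z : ℂ)))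
    · rintro x ⟨z, rfl⟩
      exact hroots z
    · exact Set.infinite_range_of_injective hinj
  have hp : ∀ x : ℂ, p.eval x = (1 - M).det := by
    intro x
    have := congrArg (Polynomial.eval x) hzero
    simpa [sub_eq_zero] using this
  intro z
  rw [key z, hp]
end

section
/- Let Φ be an m×m rational matrix not having 1 as an eigenvalue, let U : ℤ^m → GL_n(ℚ) be a group homomorphism such that U(v) is unipotent for every v ∈ ℤ^m, and let M be an n×n complex matrix. Suppose there is a positive integer d such that Φ·(d v) ∈ ℤ^m for all v ∈ ℤ^m and M·U(d v) = U(Φ·(d v))·M for all v ∈ ℤ^m. Then det(I − U(v)·M) = det(I − M) for all v ∈ ℤ^m. -/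
/-- A square rational matrix of size `n` is unipotent if `(M - I)^n = 0`. -/
def IsUnipotentMat {n : ℕ} (M : Matrix (Fin n) (Fin n) ℚ) : Prop :=
  (M - 1) ^ n = 0

lemma matrix_map_smul_ringHom {ι R S : Type*} [CommRing R] [CommRing S]
    (f : R →+* S) (r : R) (B : Matrix ι ι R) :
    (r • B).map f = f r • B.map f := by
  ext i j
  simp [Matrix.map_apply, Matrix.smul_apply, smul_eq_mul]

lemma unipotent_pow_eq_sum {n : ℕ} (A : Matrix (Fin n) (Fin n) ℚ)
    (hA : (A - 1) ^ n = 0) (s : ℕ) :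
    A ^ s = ∑ k ∈ Finset.range n, s.choose k • (A - 1) ^ k := by
  have h1 : (A - 1) + 1 = A := sub_add_cancel A 1
  have h2 := (Commute.one_right (A - 1)).add_pow s
  rw [h1] at h2
  have h3 : A ^ s = ∑ k ∈ Finset.range (s + 1), s.choose k • (A - 1) ^ k := by
    rw [h2]
    refine Finset.sum_congr rfl fun k _ => ?_
    rw [one_pow, mul_one, nsmul_eq_mul, (Nat.cast_commute (s.choose k) ((A - 1) ^ k)).eq]
  calc A ^ s = ∑ k ∈ Finset.range (s + 1), s.choose k • (A - 1) ^ k := h3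
    _ = ∑ k ∈ Finset.range (s + 1 + n), s.choose k • (A - 1) ^ k := by
        refine Finset.sum_subset (Finset.range_subset_range.2 (Nat.le_add_right _ _)) ?_
        intro k _ hk
        rw [Finset.mem_range, not_lt] at hk
        rw [Nat.choose_eq_zero_of_lt (Nat.lt_of_succ_le hk), zero_smul]
    _ = ∑ k ∈ Finset.range n, s.choose k • (A - 1) ^ k := by
        refine (Finset.sum_subset (Finset.range_subset_range.2 (Nat.le_add_left _ _)) ?_).symm
        intro k _ hk
        rw [Finset.mem_range, not_lt] at hk
        rw [pow_eq_zero_of_le hk hA, smul_zero]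

/-- Let `Φ` be an `m×m` rational matrix not having `1` as an eigenvalue, let
`U : ℤ^m → GL_n(ℚ)` be a group homomorphism with every `U v` unipotent, and `M` an `n×n`
complex matrix.  If there is a positive integer `d` with `Φ·(d v) ∈ ℤ^m` for all `v` and
`M·U(d v) = U(Φ·(d v))·M` for all `v`, then `det(I − U(v)·M) = det(I − M)` for all `v`. -/
theorem det_one_sub_unipotent_mul {n m : ℕ}
    (Φ : Matrix (Fin m) (Fin m) ℚ) (hΦ1 : (Φ - 1).det ≠ 0)
    (U : (Fin m → ℤ) → Matrix (Fin n) (Fin n) ℚ)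
    (hU1 : U 0 = 1) (hUmul : ∀ v w, U (v + w) = U v * U w) (hUunit : ∀ v, IsUnit (U v))
    (hUuni : ∀ v, IsUnipotentMat (U v))
    (M : Matrix (Fin n) (Fin n) ℂ)
    (d : ℕ) (hd : 0 < d)
    (hΦint : ∀ v : Fin m → ℤ, ∃ w : Fin m → ℤ,
      Φ.mulVec (fun t => (((d : ℤ) * v t : ℤ) : ℚ)) = fun t => ((w t : ℤ) : ℚ))
    (hcomm : ∀ v w : Fin m → ℤ,
      (Φ.mulVec (fun t => (((d : ℤ) * v t : ℤ) : ℚ)) = fun t => ((w t : ℤ) : ℚ)) →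
      M * (U ((d : ℤ) • v)).map (Rat.cast : ℚ → ℂ) =
        (U w).map (Rat.cast : ℚ → ℂ) * M) :
    ∀ v : Fin m → ℤ,
      (1 - (U v).map (Rat.cast : ℚ → ℂ) * M).det = (1 - M).det := by
  intro v
  classical
  set RC : ℚ →+* ℂ := Rat.castHom ℂ with hRC
  have hRCfun : (Rat.cast : ℚ → ℂ) = ⇑RC := rfl
  set F : (Fin m → ℤ) → ℂ := fun u => (1 - (U u).map (Rat.cast : ℚ → ℂ) * M).det with hF
  -- Step: the key determinant identity coming from `hcomm`.
  have step : ∀ u s w : Fin m → ℤ,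
      (Φ.mulVec (fun t => (((d : ℤ) * s t : ℤ) : ℚ)) = fun t => ((w t : ℤ) : ℚ)) →
      F (u + (d : ℤ) • s) = F (u + w) := by
    intro u s w hw
    have hMA := hcomm s w hw
    have hcommU : (U u).map (Rat.cast : ℚ → ℂ) * (U ((d : ℤ) • s)).map (Rat.cast : ℚ → ℂ)
        = (U ((d : ℤ) • s)).map (Rat.cast : ℚ → ℂ) * (U u).map (Rat.cast : ℚ → ℂ) := by
      rw [hRCfun, ← Matrix.map_mul, ← Matrix.map_mul, ← hUmul, ← hUmul, add_comm]
    simp only [hF]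
    rw [hUmul u ((d : ℤ) • s), hUmul u w, hRCfun, Matrix.map_mul, Matrix.map_mul, ← hRCfun]
    set P := (U u).map (Rat.cast : ℚ → ℂ)
    set A := (U ((d : ℤ) • s)).map (Rat.cast : ℚ → ℂ)
    set B := (U w).map (Rat.cast : ℚ → ℂ)
    calc (1 - P * A * M).det
        = (1 - M * (P * A)).det := Matrix.det_one_sub_mul_comm (P * A) M
      _ = (1 - B * (M * P)).det := by
          rw [hcommU, ← Matrix.mul_assoc, hMA, Matrix.mul_assoc]
      _ = (1 - M * P * B).det := Matrix.det_one_sub_mul_comm B (M * P)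
      _ = (1 - P * B * M).det := by
          rw [Matrix.mul_assoc]
          exact Matrix.det_one_sub_mul_comm M (P * B)
  -- Solve (Φ - 1) z = v over ℚ and clear denominators.
  have hΦu : IsUnit (Φ - 1).det := isUnit_iff_ne_zero.mpr hΦ1
  set vq : Fin m → ℚ := fun i => (v i : ℚ) with hvq
  set z : Fin m → ℚ := (Φ - 1)⁻¹.mulVec vq with hzdef
  have hz : Φ.mulVec z = z + vq := by
    have h1 : (Φ - 1).mulVec z = vq := by
      rw [hzdef, Matrix.mulVec_mulVec, Matrix.mul_nonsing_inv _ hΦu, Matrix.one_mulVec]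
    have h2 : (Φ - 1).mulVec z = Φ.mulVec z - z := by
      rw [Matrix.sub_mulVec, Matrix.one_mulVec]
    rw [h2] at h1
    funext i
    have h3 := congrFun h1 i
    simp only [Pi.sub_apply, Pi.add_apply] at h3 ⊢
    linarith
  set c : ℕ := ∏ i, (z i).den with hc
  have hcpos : 0 < c := Finset.prod_pos fun i _ => (z i).pos
  have hyex : ∀ i, ∃ k : ℤ, (c : ℚ) * z i = (k : ℚ) := by
    intro i
    obtain ⟨e, he⟩ := Finset.dvd_prod_of_mem (fun j => (z j).den) (Finset.mem_univ i)
    refine ⟨(z i).num * e, ?_⟩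
    have hden : ((z i).den : ℚ) ≠ 0 := by exact_mod_cast (z i).den_ne_zero
    have hcq : (c : ℚ) = ((z i).den : ℚ) * (e : ℚ) := by
      rw [hc]; exact_mod_cast congrArg (Nat.cast : ℕ → ℚ) he
    rw [hcq]
    push_cast
    rw [mul_comm ((z i).den : ℚ) (e : ℚ), mul_assoc, Rat.den_mul_eq_num]
    ring
  choose y hy using hyex
  have hΦy : Φ.mulVec (fun i => ((y i : ℤ) : ℚ)) = fun i => ((y i : ℚ) + (c : ℚ) * vq i) := by
    have h0 : (fun i => ((y i : ℤ) : ℚ)) = (c : ℚ) • z := by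
      funext i; rw [Pi.smul_apply, smul_eq_mul, hy i]
    rw [h0, Matrix.mulVec_smul, hz]
    funext i
    simp only [Pi.smul_apply, Pi.add_apply, smul_eq_mul, mul_add]
    rw [hy i]
  -- The key family of equalities F ((d*t*c) • v) = F 0.
  have hkey : ∀ t : ℕ, F ((d * t * c) • v) = F 0 := by
    intro t
    have hcond : Φ.mulVec (fun i => (((d : ℤ) * ((t : ℤ) • y) i : ℤ) : ℚ))
        = fun i => (((((d : ℤ) * t) • y + ((d : ℤ) * t * c) • v) i : ℤ) : ℚ) := by
      have hl : (fun i => (((d : ℤ) * ((t : ℤ) • y) i : ℤ) : ℚ))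
          = ((d * t : ℚ)) • (fun i => ((y i : ℤ) : ℚ)) := by
        funext i
        simp only [Pi.smul_apply, smul_eq_mul]
        push_cast
        ring
      rw [hl, Matrix.mulVec_smul, hΦy]
      funext i
      simp only [Pi.smul_apply, Pi.add_apply, smul_eq_mul, hvq]
      push_cast
      ring
    have hs := step (-(((d : ℤ) * t) • y)) ((t : ℤ) • y)
      (((d : ℤ) * t) • y + ((d : ℤ) * t * c) • v) hcond
    have e1 : -(((d : ℤ) * t) • y) + (d : ℤ) • ((t : ℤ) • y) = 0 := by
      rw [smul_smul]; exact neg_add_cancel _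
    have e2 : -(((d : ℤ) * t) • y) + (((d : ℤ) * t) • y + ((d : ℤ) * t * c) • v)
        = ((d : ℤ) * t * c) • v := neg_add_cancel_left _ _
    rw [e1, e2] at hs
    have e3 : ((d : ℤ) * t * c) • v = (d * t * c) • v := by
      rw [show ((d : ℤ) * t * c) = ((d * t * c : ℕ) : ℤ) by push_cast; ring, natCast_zsmul]
    rw [e3] at hs
    exact hs.symm
  -- Polynomial interpolation of s ↦ F (s • v).
  set E : Matrix (Fin n) (Fin n) ℚ := U v - 1 with hE
  set EC : Matrix (Fin n) (Fin n) ℂ := E.map (Rat.cast : ℚ → ℂ) with hEC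
  have hUpow : ∀ s : ℕ, U (s • v) = U v ^ s := by
    intro s
    induction s with
    | zero => simpa using hU1
    | succ s ih => rw [succ_nsmul, hUmul, ih, pow_succ]
  have hmapS : ∀ s : ℕ, (U (s • v)).map (Rat.cast : ℚ → ℂ)
      = ∑ k ∈ Finset.range n, s.choose k • EC ^ k := by
    intro s
    rw [hUpow s, unipotent_pow_eq_sum (U v) (hUuni v) s]
    show RC.mapMatrix (∑ k ∈ Finset.range n, s.choose k • E ^ k) = _
    rw [map_sum]
    refine Finset.sum_congr rfl fun k _ => ?_
    rw [map_nsmul, map_pow]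
    rfl
  set q : ℕ → Polynomial ℂ := fun k => Polynomial.C ((k.factorial : ℂ))⁻¹ * descPochhammer ℂ k
    with hq
  set H : Matrix (Fin n) (Fin n) (Polynomial ℂ) :=
    ∑ k ∈ Finset.range n, q k • (EC ^ k).map Polynomial.C with hH
  set p : Polynomial ℂ := (1 - H * M.map Polynomial.C).det with hp
  have heval : ∀ s : ℕ, p.eval (s : ℂ) = F (s • v) := by
    intro s
    have h1 : p.eval (s : ℂ)
        = ((1 - H * M.map Polynomial.C).map (Polynomial.eval (s : ℂ))).det := by
      rw [hp]
      exact RingHom.map_det (Polynomial.evalRingHom (s : ℂ)) _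
    have hψ : ∀ (B : Matrix (Fin n) (Fin n) (Polynomial ℂ)),
        B.map (Polynomial.eval (s : ℂ)) = (Polynomial.evalRingHom (s : ℂ)).mapMatrix B :=
      fun B => rfl
    have h2 : (1 - H * M.map Polynomial.C).map (Polynomial.eval (s : ℂ))
        = 1 - (∑ k ∈ Finset.range n, s.choose k • EC ^ k) * M := by
      rw [hψ, map_sub, map_one, map_mul]
      congr 1
      congr 1
      · rw [← hψ, hH]
        have hmap : (∑ k ∈ Finset.range n, q k • (EC ^ k).map Polynomial.C).map
            (Polynomial.eval (s : ℂ))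
            = ∑ k ∈ Finset.range n, ((q k).eval (s : ℂ)) • ((EC ^ k).map Polynomial.C).map
              (Polynomial.eval (s : ℂ)) := by
          rw [hψ, map_sum]
          refine Finset.sum_congr rfl fun k _ => ?_
          rw [← hψ]
          exact matrix_map_smul_ringHom (Polynomial.evalRingHom (s : ℂ)) (q k) _
        rw [hmap]
        refine Finset.sum_congr rfl fun k _ => ?_
        have hqk : (q k).eval (s : ℂ) = (s.choose k : ℂ) := by
          rw [hq]
          simp only [Polynomial.eval_mul, Polynomial.eval_C]
          rw [descPochhammer_eval_eq_descFactorial ℂ s k,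
            Nat.descFactorial_eq_factorial_mul_choose]
          push_cast
          rw [← mul_assoc, inv_mul_cancel₀, one_mul]
          exact_mod_cast Nat.factorial_ne_zero k
        have hBk : ((EC ^ k).map Polynomial.C).map (Polynomial.eval (s : ℂ)) = EC ^ k := by
          ext i j
          simp [Matrix.map_apply]
        rw [hqk, hBk, Nat.cast_smul_eq_nsmul]
      · rw [← hψ]
        ext i j
        simp [Matrix.map_apply]
    rw [h1, h2, ← hmapS s]
  -- p is constant.
  have hconst : p = Polynomial.C (F 0) := by
    have hzero : p - Polynomial.C (F 0) = 0 := by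
      apply Polynomial.eq_zero_of_infinite_isRoot
      apply Set.infinite_of_injective_forall_mem
        (f := fun t : ℕ => ((d * t * c : ℕ) : ℂ))
      · intro a b hab
        simp only [Nat.cast_inj] at hab
        have hdc : 0 < d * c := Nat.mul_pos hd hcpos
        apply Nat.eq_of_mul_eq_mul_left hdc
        calc d * c * a = d * a * c := by ring
          _ = d * b * c := hab
          _ = d * c * b := by ring
      · intro t
        simp only [Set.mem_setOf_eq, Polynomial.IsRoot, Polynomial.eval_sub,
          Polynomial.eval_C]
        rw [heval (d * t * c), hkey t, sub_self]
    have := sub_eq_zero.mp hzero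
    exact this
  have h1 := heval 1
  rw [hconst] at h1
  simp only [Polynomial.eval_C, one_smul] at h1
  have hF0 : F 0 = (1 - M).det := by
    simp only [hF, hU1]
    rw [Matrix.map_one (Rat.cast : ℚ → ℂ) (by norm_num) (by norm_num), one_mul]
  exact (h1.symm.trans hF0 : F v = (1 - M).det)
end

section
/- Let s and m be positive integers, let λ_1, …, λ_s : ℤ^m → ℂˣ be group homomorphisms, with indices taken cyclically so that λ_{s+1} = λ_1, and let Φ be an m×m rational matrix not having 1 as an eigenvalue. Suppose there is a positive integer k such that Φ·(k w) ∈ ℤ^m and λ_{i+1}(k w) = λ_i(Φ·(k w)) for all w ∈ ℤ^m and all i ∈ {1,…,s}. Assume moreover that for every v ∈ ℤ^m the multiplicative subgroup of ℂˣ generated by λ_1(v), …, λ_s(v) contains no root of unity other than 1. Then λ_1(v)·λ_2(v)⋯λ_s(v) = 1 for every v ∈ ℤ^m. -/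
/-- Let `λ_1, …, λ_s : ℤ^m → ℂˣ` be group homomorphisms, indexed cyclically (so `λ_{s+1} = λ_1`,
which corresponds to the cyclic addition `i + 1` in `Fin s`), and let `Φ` be an `m×m` rational
matrix not having `1` as an eigenvalue.  Suppose there is a positive integer `k` such that
`Φ·(k w) ∈ ℤ^m` and `λ_{i+1}(k w) = λ_i(Φ·(k w))` for all `w ∈ ℤ^m` and all `i`.  If for every
`v ∈ ℤ^m` the subgroup of `ℂˣ` generated by `λ_1(v), …, λ_s(v)` contains no root of unity
other than `1`, then `λ_1(v)·λ_2(v)⋯λ_s(v) = 1` for every `v ∈ ℤ^m`. -/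
theorem prod_eigenvalue_homs_eq_one {s m : ℕ} [NeZero s] (hm : 0 < m)
    (l : Fin s → (Fin m → ℤ) → ℂˣ)
    (hl1 : ∀ i, l i 0 = 1) (hlmul : ∀ i v w, l i (v + w) = l i v * l i w)
    (Φ : Matrix (Fin m) (Fin m) ℚ) (hΦ1 : (Φ - 1).det ≠ 0)
    (k : ℕ) (hk : 0 < k)
    (hΦint : ∀ w : Fin m → ℤ, ∃ w' : Fin m → ℤ,
      Φ.mulVec (fun t => (((k : ℤ) * w t : ℤ) : ℚ)) = fun t => ((w' t : ℤ) : ℚ))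
    (hrel : ∀ w w' : Fin m → ℤ,
      (Φ.mulVec (fun t => (((k : ℤ) * w t : ℤ) : ℚ)) = fun t => ((w' t : ℤ) : ℚ)) →
      ∀ i : Fin s, l (i + 1) ((k : ℤ) • w) = l i w')
    (hnet : ∀ v : Fin m → ℤ, ∀ u ∈ Subgroup.closure (Set.range fun i => l i v),
      ∀ r : ℕ, 0 < r → u ^ r = 1 → u = 1) :
    ∀ v : Fin m → ℤ, ∏ i : Fin s, l i v = 1 := by
  intro v
  -- F of natural multiples
  have Fpow : ∀ (u : Fin m → ℤ) (n : ℕ),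
      (∏ i : Fin s, l i ((n : ℤ) • u)) = (∏ i : Fin s, l i u) ^ n := by
    intro u n
    induction n with
    | zero => simp [hl1]
    | succ n ih =>
        have : ((n + 1 : ℕ) : ℤ) • u = (n : ℤ) • u + u := by
          push_cast; rw [add_smul, one_smul]
        rw [this]
        simp only [hlmul]
        rw [Finset.prod_mul_distrib, ih, pow_succ]
  -- solve (Φ - 1) z = v over ℚ
  set vq : Fin m → ℚ := fun t => (v t : ℚ) with hvq
  have hunit : IsUnit (Φ - 1).det := isUnit_iff_ne_zero.mpr hΦ1
  set z : Fin m → ℚ := (Φ - 1)⁻¹.mulVec vq with hz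
  have hsolve : (Φ - 1).mulVec z = vq := by
    rw [hz, Matrix.mulVec_mulVec, Matrix.mul_nonsing_inv _ hunit, Matrix.one_mulVec]
  have hΦz : Φ.mulVec z = z + vq := by
    have := hsolve
    rw [Matrix.sub_mulVec, Matrix.one_mulVec, sub_eq_iff_eq_add] at this
    rw [this, add_comm]
  -- common denominator
  set d : ℕ := ∏ t : Fin m, (z t).den with hd
  have hdpos : 0 < d := Finset.prod_pos (fun t _ => (z t).pos)
  have hy : ∀ t, ∃ yt : ℤ, (yt : ℚ) = (d : ℚ) * z t := by
    intro t
    obtain ⟨c, hc⟩ := Finset.dvd_prod_of_mem (fun t : Fin m => (z t).den) (Finset.mem_univ t)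
    refine ⟨c * (z t).num, ?_⟩
    have hden : ((z t).den : ℚ) * z t = (z t).num := by
      rw [mul_comm, Rat.mul_den_eq_num]
    have hdq : (d : ℚ) = ((z t).den : ℚ) * c := by rw [hd, hc]; push_cast; ring
    push_cast
    rw [hdq, mul_right_comm, hden]
    ring
  choose y hyz using hy
  -- the image vector
  set w' : Fin m → ℤ := fun t => (k : ℤ) * y t + (k * d : ℤ) * v t with hw'
  have hmv : Φ.mulVec (fun t => (((k : ℤ) * y t : ℤ) : ℚ)) = fun t => ((w' t : ℤ) : ℚ) := by
    have hcast : (fun t => (((k : ℤ) * y t : ℤ) : ℚ)) = (k : ℚ) • ((d : ℚ) • z) := by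
      funext t
      simp only [Pi.smul_apply, smul_eq_mul]
      push_cast
      rw [hyz t]
    rw [hcast, Matrix.mulVec_smul, Matrix.mulVec_smul, hΦz]
    funext t
    simp only [hw', Pi.smul_apply, Pi.add_apply, smul_eq_mul, hvq]
    push_cast
    rw [mul_add, ← hyz t]
    ring
  have hrel' := hrel y w' hmv
  -- product over i of the relation
  have hL : (∏ i : Fin s, l (i + 1) ((k : ℤ) • y)) = ∏ i : Fin s, l i ((k : ℤ) • y) :=
    Fintype.prod_equiv (Equiv.addRight 1) _ _ (fun i => rfl)
  have hkey : (∏ i : Fin s, l i ((k : ℤ) • y))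
      = (∏ i : Fin s, l i ((k : ℤ) • y)) * (∏ i : Fin s, l i v) ^ (k * d) := by
    calc (∏ i : Fin s, l i ((k : ℤ) • y))
        = ∏ i : Fin s, l (i + 1) ((k : ℤ) • y) := hL.symm
      _ = ∏ i : Fin s, l i w' := by
          exact Finset.prod_congr rfl (fun i _ => hrel' i)
      _ = ∏ i : Fin s, l i ((k : ℤ) • y + ((k * d : ℕ) : ℤ) • v) := by
          apply Finset.prod_congr rfl
          intro i _
          congr 1
      _ = (∏ i : Fin s, l i ((k : ℤ) • y)) * ∏ i : Fin s, l i (((k * d : ℕ) : ℤ) • v) := by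
          simp only [hlmul]
          rw [Finset.prod_mul_distrib]
      _ = (∏ i : Fin s, l i ((k : ℤ) • y)) * (∏ i : Fin s, l i v) ^ (k * d) := by
          rw [Fpow v (k * d)]
  have hpow : (∏ i : Fin s, l i v) ^ (k * d) = 1 := by
    have := hkey
    nth_rewrite 1 [← mul_one (∏ i : Fin s, l i ((k : ℤ) • y))] at this
    exact (mul_left_cancel this).symm
  exact hnet v _ (Subgroup.prod_mem _ (fun i _ => Subgroup.subset_closure ⟨i, rfl⟩))
    (k * d) (Nat.mul_pos hk hdpos) hpow
end

section
/- Let k and c be positive integers, let n_1, …, n_c be positive integers, and for each i = 1, …, c let ρ_i : ℤ^k → GL_{n_i}(ℤ) be a group homomorphism. Then there exists a positive integer n such that for every v ∈ ℤ^k the multiplicative subgroup of ℂˣ generated by the union, over i = 1,…,c, of the sets of complex eigenvalues of ρ_i(n·v) contains no root of unity other than 1. -/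
open Polynomial IntermediateField Module

/-- Every natural number is at most twice the square of its totient. -/
lemma totient_sq_bound : ∀ m : ℕ, (Odd m → m ≤ m.totient ^ 2) ∧ m ≤ 2 * m.totient ^ 2 := by
  intro m
  induction m using Nat.recOnPosPrimePosCoprime with
  | prime_pow p a hp ha =>
    rw [Nat.totient_prime_pow hp ha]
    by_cases h2 : p = 2
    · subst h2
      constructor
      · intro hodd
        exact absurd hodd (by simpa using (Nat.even_pow.mpr ⟨even_two, ha.ne'⟩))
      · have h1 : (2:ℕ) ^ (a-1) * (2-1) = 2 ^ (a-1) := by norm_num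
        rw [h1]
        calc (2:ℕ) ^ a ≤ 2 ^ (2*(a-1)+1) := Nat.pow_le_pow_right (by norm_num) (by omega)
          _ = 2 * ((2:ℕ)^(a-1))^2 := by
              rw [Nat.mul_comm 2 (a-1), pow_succ, pow_mul, mul_comm]
    · have hp3 : 3 ≤ p := by
        have := hp.two_le
        omega
      have h1 : p ≤ (p-1)^2 := by
        have h2' : 2 ≤ p - 1 := by omega
        calc p ≤ 2 * (p-1) := by omega
          _ ≤ (p-1) * (p-1) := Nat.mul_le_mul_right _ h2'
          _ = (p-1)^2 := (sq _).symm
      have key : p ^ a ≤ (p ^ (a-1) * (p-1))^2 := by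
        calc p ^ a ≤ p ^ (2*(a-1)+1) := Nat.pow_le_pow_right (by omega) (by omega)
          _ = (p^(a-1))^2 * p := by rw [Nat.mul_comm 2 (a-1), pow_succ, pow_mul]
          _ ≤ (p^(a-1))^2 * (p-1)^2 := Nat.mul_le_mul_left _ h1
          _ = (p^(a-1) * (p-1))^2 := (mul_pow ..).symm
      exact ⟨fun _ => key, key.trans (Nat.le_mul_of_pos_left _ two_pos)⟩
  | zero => simp
  | one => simp
  | coprime a b ha hb hab iha ihb =>
    rw [Nat.totient_mul hab]
    have hmain : ∀ {x y : ℕ}, Odd x → x ≤ x.totient ^2 → y ≤ 2 * y.totient ^ 2 →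
        x * y ≤ 2 * (x.totient * y.totient)^2 := by
      intro x y _ h1 h2
      calc x * y ≤ x.totient ^ 2 * (2 * y.totient ^ 2) := Nat.mul_le_mul h1 h2
        _ = 2 * (x.totient * y.totient)^2 := by ring
    constructor
    · intro hodd
      rcases Nat.odd_mul.mp hodd with ⟨hoa, hob⟩
      calc a * b ≤ a.totient ^ 2 * b.totient ^ 2 := Nat.mul_le_mul (iha.1 hoa) (ihb.1 hob)
          _ = (a.totient * b.totient)^2 := (mul_pow ..).symm
    · rcases Nat.even_or_odd a with hea | hoa
      · have hob : Odd b := by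
          rcases Nat.even_or_odd b with heb | hob
          · exfalso
            have h2 : (2:ℕ) ∣ Nat.gcd a b := Nat.dvd_gcd hea.two_dvd heb.two_dvd
            rw [hab.gcd_eq_one] at h2
            omega
          · exact hob
        rw [mul_comm a b, mul_comm a.totient b.totient]
        exact hmain hob (ihb.1 hob) iha.2
      · exact hmain hoa (iha.1 hoa) ihb.2

lemma totient_sq_bound' (m : ℕ) : m ≤ 2 * m.totient ^ 2 := (totient_sq_bound m).2

lemma finrank_adjoin_finset_le (d : ℕ) (s : Finset ℂ)
    (hs : ∀ x ∈ s, IsIntegral ℚ x ∧ (minpoly ℚ x).natDegree ≤ d) :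
    Module.finrank ℚ (IntermediateField.adjoin ℚ (s : Set ℂ)) ≤ d ^ s.card := by
  classical
  induction s using Finset.induction_on with
  | empty =>
    rw [Finset.coe_empty, IntermediateField.adjoin_empty, Finset.card_empty, pow_zero]
    exact le_of_eq IntermediateField.finrank_bot
  | @insert a s ha ih =>
    have hins : (↑(insert a s) : Set ℂ) = {a} ∪ (↑s : Set ℂ) := by
      rw [Finset.coe_insert, Set.insert_eq]
    rw [hins, IntermediateField.adjoin_union, Finset.card_insert_of_notMem ha, pow_succ]
    have hmem := hs a (Finset.mem_insert_self a s)
    have h1 : Module.finrank ℚ (IntermediateField.adjoin ℚ ({a} : Set ℂ)) ≤ d := by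
      rw [IntermediateField.adjoin.finrank hmem.1]
      exact hmem.2
    calc Module.finrank ℚ ↥(IntermediateField.adjoin ℚ ({a} : Set ℂ) ⊔
            IntermediateField.adjoin ℚ (↑s : Set ℂ))
        ≤ Module.finrank ℚ (IntermediateField.adjoin ℚ ({a} : Set ℂ)) *
            Module.finrank ℚ (IntermediateField.adjoin ℚ (↑s : Set ℂ)) :=
          IntermediateField.finrank_sup_le _ _
      _ ≤ d * d ^ s.card :=
          Nat.mul_le_mul h1 (ih fun x hx => hs x (Finset.mem_insert_of_mem hx))
      _ = d ^ s.card * d := Nat.mul_comm _ _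

lemma spec_isRoot {m : ℕ} (M : Matrix (Fin m) (Fin m) ℂ) {z : ℂ}
    (hz : z ∈ spectrum ℂ M) : M.charpoly.IsRoot z := by
  rw [spectrum.mem_iff] at hz
  have hdet : (Matrix.diagonal (fun _ : Fin m => z) - M).det = 0 := by
    by_contra h
    apply hz
    have : algebraMap ℂ (Matrix (Fin m) (Fin m) ℂ) z = Matrix.diagonal (fun _ => z) := by
      rw [Matrix.algebraMap_eq_diagonal]; rfl
    rw [this]
    exact (Matrix.isUnit_iff_isUnit_det _).mpr (isUnit_iff_ne_zero.mpr h)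
  have hmap : (Matrix.charmatrix M).map (Polynomial.evalRingHom z) =
      Matrix.diagonal (fun _ : Fin m => z) - M := by
    ext i j
    by_cases h : i = j <;>
      simp [Matrix.charmatrix_apply, Matrix.map_apply, Matrix.diagonal_apply, h]
  have h3 : M.charpoly.eval z = ((Matrix.charmatrix M).map (Polynomial.evalRingHom z)).det := by
    rw [Matrix.charpoly,
      show Polynomial.eval z (Matrix.charmatrix M).det
          = (Polynomial.evalRingHom z) (Matrix.charmatrix M).det from rfl,
      RingHom.map_det, RingHom.mapMatrix_apply]
  rw [Polynomial.IsRoot, h3, hmap, hdet]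

/-- Given group homomorphisms `ρ_i : ℤ^k → GL_{n_i}(ℤ)` for `i = 1, …, c`, there is a positive
integer `N` such that for every `v ∈ ℤ^k` the subgroup of `ℂˣ` generated by the union of the
sets of complex eigenvalues of the matrices `ρ_i(N·v)` contains no root of unity other
than `1`. -/
theorem exists_power_net {k c : ℕ} (hk : 0 < k) (hc : 0 < c)
    (nn : Fin c → ℕ) (hnn : ∀ i, 0 < nn i)
    (ρ : (i : Fin c) → (Fin k → ℤ) → Matrix (Fin (nn i)) (Fin (nn i)) ℤ)
    (hρ1 : ∀ i, ρ i 0 = 1) (hρmul : ∀ i v w, ρ i (v + w) = ρ i v * ρ i w)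
    (hρunit : ∀ i v, IsUnit (ρ i v)) :
    ∃ N : ℕ, 0 < N ∧ ∀ v : Fin k → ℤ,
      ∀ u ∈ Subgroup.closure (⋃ i : Fin c,
        {u : ℂˣ | (u : ℂ) ∈ spectrum ℂ ((ρ i ((N : ℤ) • v)).map (Int.cast : ℤ → ℂ))}),
      ∀ r : ℕ, 0 < r → u ^ r = 1 → u = 1 := by
  classical
  set n : ℕ := ∑ i, nn i with hn
  have hn1 : 1 ≤ n := by
    calc 1 ≤ nn ⟨0, hc⟩ := hnn _
      _ ≤ n := Finset.single_le_sum (fun i _ => Nat.zero_le _) (Finset.mem_univ _)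
  set D : ℕ := n ^ n with hD
  set R : ℕ := 2 * D ^ 2 with hR
  set N : ℕ := Nat.factorial R with hN
  refine ⟨N, Nat.factorial_pos R, ?_⟩
  intro v u hu r hr hur
  set M : (i : Fin c) → Matrix (Fin (nn i)) (Fin (nn i)) ℂ :=
    fun i => (ρ i v).map (Int.cast : ℤ → ℂ) with hM
  -- power identity
  have hpowZ : ∀ i, ∀ m : ℕ, ρ i ((m : ℤ) • v) = ρ i v ^ m := by
    intro i m
    induction m with
    | zero => simpa using hρ1 i
    | succ t ih =>
      have h1 : (((t+1 : ℕ) : ℤ)) • v = v + ((t : ℕ) : ℤ) • v := by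
        push_cast
        rw [add_comm ((t:ℤ)) 1, add_smul, one_smul]
      rw [h1, hρmul, ih, pow_succ']
  have hpow : ∀ i, (ρ i ((N : ℤ) • v)).map (Int.cast : ℤ → ℂ) = (M i) ^ N := by
    intro i
    rw [hpowZ i N]
    exact map_pow ((Int.castRingHom ℂ).mapMatrix) (ρ i v) N
  set T : Set ℂˣ := ⋃ i, {w : ℂˣ | (w : ℂ) ∈ spectrum ℂ (M i)} with hT
  -- u is an N-th power of an element of the closure of T
  have hsub : (⋃ i : Fin c,
      {u : ℂˣ | (u : ℂ) ∈ spectrum ℂ ((ρ i ((N : ℤ) • v)).map (Int.cast : ℤ → ℂ))}) ⊆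
      (powMonoidHom N : ℂˣ →* ℂˣ) '' T := by
    rintro w hw
    rw [Set.mem_iUnion] at hw
    obtain ⟨i, hw⟩ := hw
    rw [Set.mem_setOf_eq, hpow i,
      spectrum.map_pow_of_pos (M i) (Nat.factorial_pos R)] at hw
    obtain ⟨z, hz, hzw⟩ := hw
    have hz0 : z ≠ 0 := by
      intro h
      exact w.ne_zero (by rw [← hzw, h]; simp [zero_pow (Nat.factorial_pos R).ne'])
    refine ⟨Units.mk0 z hz0, Set.mem_iUnion.mpr ⟨i, hz⟩, Units.ext ?_⟩
    simpa [powMonoidHom] using hzw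
  have hmem : u ∈ Subgroup.map (powMonoidHom N : ℂˣ →* ℂˣ) (Subgroup.closure T) := by
    rw [MonoidHom.map_closure]
    exact Subgroup.closure_mono hsub hu
  obtain ⟨η, hη, hηu⟩ := hmem
  have hηu' : η ^ N = u := hηu
  -- the finset of all eigenvalues at level v
  set s : Finset ℂ := Finset.univ.biUnion (fun i : Fin c => (M i).charpoly.roots.toFinset)
    with hs
  have hTs : ∀ w ∈ T, (w : ℂ) ∈ (s : Set ℂ) := by
    intro w hw
    rw [hT, Set.mem_iUnion] at hw
    obtain ⟨i, hw⟩ := hw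
    have hroot := spec_isRoot (M i) hw
    have hne : (M i).charpoly ≠ 0 := (Matrix.charpoly_monic (M i)).ne_zero
    refine Finset.mem_coe.mpr (Finset.mem_biUnion.mpr ⟨i, Finset.mem_univ i, ?_⟩)
    exact Multiset.mem_toFinset.mpr ((Polynomial.mem_roots hne).mpr hroot)
  have hcard : s.card ≤ n := by
    calc s.card ≤ ∑ i, ((M i).charpoly.roots.toFinset).card := Finset.card_biUnion_le
      _ ≤ ∑ i, nn i := by
        refine Finset.sum_le_sum fun i _ => ?_
        calc ((M i).charpoly.roots.toFinset).card ≤ Multiset.card (M i).charpoly.roots :=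
              Multiset.toFinset_card_le _
          _ ≤ (M i).charpoly.natDegree := Polynomial.card_roots' _
          _ = Fintype.card (Fin (nn i)) := Matrix.charpoly_natDegree_eq_dim _
          _ = nn i := Fintype.card_fin _
  have hdeg : ∀ x ∈ s, IsIntegral ℚ x ∧ (minpoly ℚ x).natDegree ≤ n := by
    intro x hx
    simp only [hs, Finset.mem_biUnion, Multiset.mem_toFinset] at hx
    obtain ⟨i, _, hx⟩ := hx
    have hne : (M i).charpoly ≠ 0 := (Matrix.charpoly_monic (M i)).ne_zero
    have hroot : (M i).charpoly.IsRoot x := (Polynomial.mem_roots hne).mp hx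
    set Q : ℚ[X] := ((ρ i v).charpoly).map (Int.castRingHom ℚ) with hQ
    have hQmonic : Q.Monic :=
      Polynomial.Monic.map (Int.castRingHom ℚ) (Matrix.charpoly_monic (ρ i v))
    have hMi : M i = (ρ i v).map (Int.castRingHom ℂ) := rfl
    have hQmap : Q.map (algebraMap ℚ ℂ) = (M i).charpoly := by
      rw [hQ, Polynomial.map_map, hMi, Matrix.charpoly_map]
      congr 1
    have haev : Polynomial.aeval x Q = 0 := by
      rw [Polynomial.aeval_def, ← Polynomial.eval_map, hQmap]
      exact hroot
    have hint : IsIntegral ℚ x := ⟨Q, hQmonic, haev⟩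
    refine ⟨hint, ?_⟩
    have hdvd : minpoly ℚ x ∣ Q := minpoly.dvd ℚ x haev
    calc (minpoly ℚ x).natDegree ≤ Q.natDegree :=
          Polynomial.natDegree_le_of_dvd hdvd hQmonic.ne_zero
      _ = ((ρ i v).charpoly).natDegree :=
          Polynomial.natDegree_map_eq_of_injective
            (fun x y h => by simpa using h) _
      _ = Fintype.card (Fin (nn i)) := Matrix.charpoly_natDegree_eq_dim _
      _ = nn i := Fintype.card_fin _
      _ ≤ n := Finset.single_le_sum (fun i _ => Nat.zero_le _) (Finset.mem_univ i)
  set K : IntermediateField ℚ ℂ := IntermediateField.adjoin ℚ (s : Set ℂ) with hK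
  haveI : Finite ((s : Set ℂ) : Set ℂ) := s.finite_toSet
  haveI hKfd : FiniteDimensional ℚ K :=
    IntermediateField.finiteDimensional_adjoin fun x hx => (hdeg x hx).1
  have hfinrank : Module.finrank ℚ K ≤ D := by
    calc Module.finrank ℚ K ≤ n ^ s.card := finrank_adjoin_finset_le n s hdeg
      _ ≤ n ^ n := Nat.pow_le_pow_right hn1 hcard
  -- the subgroup of units with values in K
  set H : Subgroup ℂˣ :=
    { carrier := {w : ℂˣ | (w : ℂ) ∈ K}
      one_mem' := by
        simp only [Set.mem_setOf_eq, Units.val_one]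
        exact one_mem K
      mul_mem' := fun {a b} ha hb => by
        simp only [Set.mem_setOf_eq, Units.val_mul] at *
        exact mul_mem ha hb
      inv_mem' := fun {a} ha => by
        simp only [Set.mem_setOf_eq, Units.val_inv_eq_inv_val] at *
        exact inv_mem ha } with hH
  have hTH : T ⊆ (H : Set ℂˣ) := fun w hw =>
    IntermediateField.subset_adjoin ℚ (s : Set ℂ) (hTs w hw)
  have hηH : (η : ℂ) ∈ K := (Subgroup.closure_le H).mpr hTH hη
  -- η has finite order
  have hfin : IsOfFinOrder η := by
    refine isOfFinOrder_iff_pow_eq_one.mpr ⟨N * r, by positivity, ?_⟩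
    rw [pow_mul, hηu', hur]
  set r' : ℕ := orderOf η with hr'
  have hr'pos : 0 < r' := hfin.orderOf_pos
  have hprim : IsPrimitiveRoot (η : ℂ) r' := by
    exact IsPrimitiveRoot.coe_units_iff.mpr (IsPrimitiveRoot.orderOf η)
  have hcyc : Polynomial.cyclotomic r' ℚ = minpoly ℚ (η : ℂ) :=
    Polynomial.cyclotomic_eq_minpoly_rat hprim hr'pos
  have htot : r'.totient ≤ D := by
    have h1 : r'.totient = (minpoly ℚ (η : ℂ)).natDegree := by
      rw [← hcyc, Polynomial.natDegree_cyclotomic]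
    have h2 : minpoly ℚ (η : ℂ) = minpoly ℚ (⟨(η : ℂ), hηH⟩ : K) := by
      have := minpoly.algebraMap_eq (A := ℚ) (B := ↥K) (B' := ℂ)
        (algebraMap K ℂ).injective (⟨(η : ℂ), hηH⟩ : K)
      rw [← this]
      rfl
    rw [h1, h2]
    calc (minpoly ℚ (⟨(η : ℂ), hηH⟩ : K)).natDegree ≤ Module.finrank ℚ K :=
          minpoly.natDegree_le _
      _ ≤ D := hfinrank
  have hr'R : r' ≤ R := by
    calc r' ≤ 2 * r'.totient ^ 2 := totient_sq_bound' r'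
      _ ≤ 2 * D ^ 2 := by
          have := Nat.pow_le_pow_left htot 2
          omega
  have hdvd : r' ∣ N := Nat.dvd_factorial hr'pos hr'R
  have hη1 : η ^ N = 1 := orderOf_dvd_iff_pow_eq_one.mp hdvd
  rw [← hηu', hη1]
end

section
/- Let G be a group, let φ be an automorphism of G, and let H be a normal subgroup of finite index in G with φ(H) ⊆ H. Let x_1, …, x_k ∈ G be a complete set of representatives of the cosets of H in G, where k = [G:H]. Then the cardinality of the set of φ-twisted conjugacy classes of G is at most the sum, over i = 1,…,k, of the cardinalities of the sets of (τ_{x_i}∘φ)|_H-twisted conjugacy classes of H, where τ_x : G → G denotes the inner automorphism g ↦ x g x⁻¹. In particular, R(φ) ≤ Σ_{i=1}^k R((τ_{x_i}∘φ)|_H) whenever the right-hand side is finite. -/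
/-- Sigma over `Fin (n+1)` splits as first component plus the rest. -/
def sigmaFinSuccEquiv' {n : ℕ} (T : Fin (n + 1) → Type*) :
    (Σ i, T i) ≃ T 0 ⊕ Σ i : Fin n, T i.succ where
  toFun p := Fin.cases (motive := fun i => T i → T 0 ⊕ Σ i : Fin n, T i.succ)
    Sum.inl (fun j t => Sum.inr ⟨j, t⟩) p.1 p.2
  invFun s := s.elim (fun t => ⟨0, t⟩) (fun p => ⟨p.1.succ, p.2⟩)
  left_inv := by
    rintro ⟨i, t⟩
    induction i using Fin.cases <;> simp
  right_inv := by
    rintro (t | ⟨j, t⟩) <;> simp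

lemma mk_sigma_fin : ∀ {n : ℕ} (T : Fin n → Type u),
    Cardinal.mk (Σ i, T i) = ∑ i, Cardinal.mk (T i) := by
  intro n
  induction n with
  | zero => intro T; simp
  | succ n ih =>
    intro T
    rw [Cardinal.mk_congr (sigmaFinSuccEquiv' T)]
    simp [ih, Fin.sum_univ_succ]

/-- Let `G` be a group, `φ` an automorphism of `G`, `H` a normal subgroup of finite index with
`φ(H) ⊆ H`, and `x_1, …, x_k` a complete set of coset representatives of `H` in `G`, where
`k = [G:H]`.  Then the number of `φ`-twisted conjugacy classes of `G` is at most the sum over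
`i` of the numbers of `(τ_{x_i}∘φ)|_H`-twisted conjugacy classes of `H` (as cardinals, which
in particular gives `R(φ) ≤ Σ_i R((τ_{x_i}∘φ)|_H)` whenever the right-hand side is finite). -/
theorem reidemeister_le_sum_over_cosets {G : Type*} [Group G]
    (φ : G ≃* G) (H : Subgroup G) [H.Normal] [H.FiniteIndex]
    (hφH : ∀ h ∈ H, φ h ∈ H)
    (k : ℕ) (hk : k = H.index) (x : Fin k → G)
    (hrep : ∀ g : G, ∃! i : Fin k, (x i)⁻¹ * g ∈ H) :
    Cardinal.mk (Quot fun a b : G => ∃ g : G, a = g * b * (φ g)⁻¹) ≤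
      ∑ i : Fin k, Cardinal.mk (Quot fun a b : H =>
        ∃ g : H, (a : G) = (g : G) * (b : G) * (x i * φ (g : G) * (x i)⁻¹)⁻¹) := by
  set r : G → G → Prop := fun a b => ∃ g : G, a = g * b * (φ g)⁻¹ with hr
  set s : Fin k → H → H → Prop := fun i a b =>
    ∃ g : H, (a : G) = (g : G) * (b : G) * (x i * φ (g : G) * (x i)⁻¹)⁻¹ with hs
  -- the map (i, [h]) ↦ [h * x i]
  have hwd : ∀ (i : Fin k) (a b : H), s i a b →
      Quot.mk r ((a : G) * x i) = Quot.mk r ((b : G) * x i) := by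
    rintro i a b ⟨g, hg⟩
    refine Quot.sound ⟨(g : G), ?_⟩
    rw [hg]; group
  let f : (Σ i : Fin k, Quot (s i)) → Quot r := fun p =>
    Quot.lift (fun h : H => Quot.mk r ((h : G) * x p.1)) (hwd p.1) p.2
  have hsurj : Function.Surjective f := by
    intro q
    induction q using Quot.ind with
    | _ a =>
      obtain ⟨i, hi, -⟩ := hrep a
      have hmem : a * (x i)⁻¹ ∈ H := by
        have := Subgroup.Normal.conj_mem ‹H.Normal› _ hi (x i)
        simpa [mul_assoc] using this
      refine ⟨⟨i, Quot.mk (s i) ⟨a * (x i)⁻¹, hmem⟩⟩, ?_⟩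
      show Quot.mk r (a * (x i)⁻¹ * x i) = Quot.mk r a
      rw [inv_mul_cancel_right]
  calc Cardinal.mk (Quot r) ≤ Cardinal.mk (Σ i : Fin k, Quot (s i)) :=
        Cardinal.mk_le_of_surjective hsurj
    _ = ∑ i : Fin k, Cardinal.mk (Quot (s i)) := mk_sigma_fin _
end

section
/- Let k_1, …, k_n be positive integers and identify ℝ^{k_1+⋯+k_n} with ℝ^{k_1}×⋯×ℝ^{k_n}, writing points as x = (x_1,…,x_n) with x_i ∈ ℝ^{k_i}. Let F be the self-map of ℝ^{k_1}×⋯×ℝ^{k_n} whose i-th component is F(x)_i = B_i x_i + p_i(x_1,…,x_{i−1}), where each B_i is a k_i×k_i real matrix and each p_i : ℝ^{k_1+⋯+k_{i−1}} → ℝ^{k_i} is a polynomial map (p_1 being a constant). If det(I − B_j) = 0 for some j ∈ {1,…,n}, then the set of fixed points of F is either empty or uncountable. -/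
/-- `f` is a polynomial map from `ℝ^{k_1}×⋯×ℝ^{k_n}` to `ℝ^l`: each of its `l` component
functions is given by a polynomial in the standard coordinates. -/
def IsPolyMap {n : ℕ} {k : Fin n → ℕ} {l : ℕ}
    (f : ((i : Fin n) → Fin (k i) → ℝ) → (Fin l → ℝ)) : Prop :=
  ∀ t : Fin l, ∃ q : MvPolynomial ((i : Fin n) × Fin (k i)) ℝ,
    ∀ x, f x t = MvPolynomial.eval (fun s => x s.1 s.2) q

/-- The perturbation direction: `v` at index `j`, zero elsewhere. -/
noncomputable def triW {n : ℕ} {k : Fin n → ℕ} (j : Fin n) (v : Fin (k j) → ℝ) :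
    (i : Fin n) → Fin (k i) → ℝ :=
  Function.update (fun i => (0 : Fin (k i) → ℝ)) j v

/-- One step of the solving iteration. -/
noncomputable def triStep {n : ℕ} {k : Fin n → ℕ}
    (B : (i : Fin n) → Matrix (Fin (k i)) (Fin (k i)) ℝ)
    (p : (i : Fin n) → ((j : Fin n) → Fin (k j) → ℝ) → (Fin (k i) → ℝ))
    (j : Fin n) (x₀ : (i : Fin n) → Fin (k i) → ℝ) (v : Fin (k j) → ℝ) (t : ℝ)
    (y : (i : Fin n) → Fin (k i) → ℝ) : (i : Fin n) → Fin (k i) → ℝ :=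
  fun i => if i ≤ j then x₀ i + t • triW j v i else (1 - B i)⁻¹.mulVec (p i y)

theorem triStep_agree {n : ℕ} {k : Fin n → ℕ}
    (B : (i : Fin n) → Matrix (Fin (k i)) (Fin (k i)) ℝ)
    (p : (i : Fin n) → ((j : Fin n) → Fin (k j) → ℝ) → (Fin (k i) → ℝ))
    (htri : ∀ (i : Fin n) x y, (∀ j, j < i → x j = y j) → p i x = p i y)
    (j : Fin n) (x₀ : (i : Fin n) → Fin (k i) → ℝ) (v : Fin (k j) → ℝ) (t : ℝ)
    (y z : (i : Fin n) → Fin (k i) → ℝ) (i : Fin n)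
    (h : ∀ i', i' < i → y i' = z i') :
    ∀ i', i' ≤ i → triStep B p j x₀ v t y i' = triStep B p j x₀ v t z i' := by
  intro i' hi'
  unfold triStep
  split_ifs with h1
  · rfl
  · rw [htri i' y z fun j' hj' => h j' (lt_of_lt_of_le hj' hi')]

theorem triStep_iterate_agree {n : ℕ} {k : Fin n → ℕ}
    (B : (i : Fin n) → Matrix (Fin (k i)) (Fin (k i)) ℝ)
    (p : (i : Fin n) → ((j : Fin n) → Fin (k j) → ℝ) → (Fin (k i) → ℝ))
    (htri : ∀ (i : Fin n) x y, (∀ j, j < i → x j = y j) → p i x = p i y)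
    (j : Fin n) (x₀ : (i : Fin n) → Fin (k i) → ℝ) (v : Fin (k j) → ℝ) (t : ℝ) :
    ∀ (m : ℕ) (y z : (i : Fin n) → Fin (k i) → ℝ) (i : Fin n), (i : ℕ) < m →
      (triStep B p j x₀ v t)^[m] y i = (triStep B p j x₀ v t)^[m] z i := by
  intro m
  induction m with
  | zero => intro y z i hi; exact absurd hi (Nat.not_lt_zero _)
  | succ m ih =>
    intro y z i hi
    rw [Function.iterate_succ_apply', Function.iterate_succ_apply']
    refine triStep_agree B p htri j x₀ v t _ _ i ?_ i le_rfl
    intro i'' hi''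
    exact ih y z i'' (by have := (Fin.lt_def).mp hi''; omega)

/-- Let `F` be the self-map of `ℝ^{k_1}×⋯×ℝ^{k_n}` with components
`F(x)_i = B_i x_i + p_i(x_1,…,x_{i−1})`, where the `B_i` are real matrices and the `p_i` are
polynomial maps depending only on the coordinates of index `< i` (so `p_1` is constant).
If `det(I − B_j) = 0` for some `j`, then the fixed point set of `F` is empty or uncountable
(i.e. admits no injection into `ℕ`). -/
theorem fixedPoints_empty_or_uncountable_of_triangular {n : ℕ} (hn : 0 < n)
    (k : Fin n → ℕ) (hk : ∀ i, 0 < k i)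
    (B : (i : Fin n) → Matrix (Fin (k i)) (Fin (k i)) ℝ)
    (p : (i : Fin n) → ((j : Fin n) → Fin (k j) → ℝ) → (Fin (k i) → ℝ))
    (hpoly : ∀ i, IsPolyMap (p i))
    (htri : ∀ (i : Fin n) x y, (∀ j, j < i → x j = y j) → p i x = p i y)
    (F : ((j : Fin n) → Fin (k j) → ℝ) → ((j : Fin n) → Fin (k j) → ℝ))
    (hF : ∀ x i, F x i = (B i).mulVec (x i) + p i x)
    (hdet : ∃ j, (1 - B j).det = 0) :
    {x | F x = x} = ∅ ∨ ¬ {x | F x = x}.Countable := by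
  rcases Set.eq_empty_or_nonempty {x | F x = x} with h | ⟨x₀, hx₀⟩
  · exact Or.inl h
  right
  intro hC
  have hx₀' : F x₀ = x₀ := hx₀
  have hfix : ∀ i, (B i).mulVec (x₀ i) + p i x₀ = x₀ i := fun i =>
    (hF x₀ i).symm.trans (congrFun hx₀' i)
  -- choose the largest singular index j
  set S : Finset (Fin n) := Finset.univ.filter (fun j => (1 - B j).det = 0) with hSdef
  obtain ⟨j₀, hj₀⟩ := hdet
  have hSne : S.Nonempty := ⟨j₀, by simp [hSdef, hj₀]⟩
  set j := S.max' hSne with hjdef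
  have hjdet : (1 - B j).det = 0 := by
    have := S.max'_mem hSne
    simpa [hSdef] using this
  have hnsing : ∀ i, j < i → (1 - B i).det ≠ 0 := by
    intro i hi hdi
    have hmem : i ∈ S := by simp [hSdef, hdi]
    exact absurd (S.le_max' i hmem) (not_le.mpr hi)
  obtain ⟨v, hv0, hvker⟩ := Matrix.exists_mulVec_eq_zero_iff.mpr hjdet
  have hBv : (B j).mulVec v = v := by
    rw [Matrix.sub_mulVec, Matrix.one_mulVec, sub_eq_zero] at hvker
    exact hvker.symm
  -- the family of fixed points
  have key : ∀ (t : ℝ) (i : Fin n),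
      triStep B p j x₀ v t ((triStep B p j x₀ v t)^[n] x₀) i
        = (triStep B p j x₀ v t)^[n] x₀ i := by
    intro t i
    conv_lhs => rw [← Function.iterate_succ_apply' (triStep B p j x₀ v t) n x₀]
    rw [Function.iterate_succ_apply]
    exact triStep_iterate_agree B p htri j x₀ v t n _ x₀ i i.isLt
  have hle : ∀ (t : ℝ) (i : Fin n), i ≤ j →
      (triStep B p j x₀ v t)^[n] x₀ i = x₀ i + t • triW j v i := by
    intro t i hij
    rw [← key t i]
    simp only [triStep, if_pos hij]
  have hlt : ∀ (t : ℝ) (i : Fin n), i < j → (triStep B p j x₀ v t)^[n] x₀ i = x₀ i := by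
    intro t i hij
    rw [hle t i hij.le, triW, Function.update_of_ne (ne_of_lt hij), smul_zero, add_zero]
  have heqj : ∀ t : ℝ, (triStep B p j x₀ v t)^[n] x₀ j = x₀ j + t • v := by
    intro t
    rw [hle t j le_rfl, triW, Function.update_self]
  have hgt : ∀ (t : ℝ) (i : Fin n), j < i →
      (triStep B p j x₀ v t)^[n] x₀ i
        = (1 - B i)⁻¹.mulVec (p i ((triStep B p j x₀ v t)^[n] x₀)) := by
    intro t i hij
    rw [← key t i]
    simp only [triStep, if_neg (not_le.mpr hij)]
  have hp : ∀ (t : ℝ) (i : Fin n), i ≤ j →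
      p i ((triStep B p j x₀ v t)^[n] x₀) = p i x₀ :=
    fun t i hij => htri i _ _ fun i' hi' => hlt t i' (lt_of_lt_of_le hi' hij)
  have hXfixed : ∀ t : ℝ, ((triStep B p j x₀ v t)^[n] x₀) ∈ {x | F x = x} := by
    intro t
    show F _ = _
    funext i
    rw [hF]
    rcases lt_trichotomy i j with h | h | h
    · rw [hlt t i h, hp t i h.le]
      exact hfix i
    · subst h
      rw [heqj t, hp t j le_rfl, Matrix.mulVec_add, Matrix.mulVec_smul, hBv,
        add_right_comm, hfix j]
    · have hu := hgt t i h
      have hdet' : IsUnit (1 - B i).det := isUnit_iff_ne_zero.mpr (hnsing i h)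
      have hAu : (1 - B i).mulVec ((triStep B p j x₀ v t)^[n] x₀ i)
          = p i ((triStep B p j x₀ v t)^[n] x₀) := by
        rw [hu, Matrix.mulVec_mulVec, Matrix.mul_nonsing_inv _ hdet', Matrix.one_mulVec]
      rw [Matrix.sub_mulVec, Matrix.one_mulVec] at hAu
      rw [← hAu]
      abel
  have hinj : Function.Injective fun t : ℝ => (triStep B p j x₀ v t)^[n] x₀ := by
    intro t t' h
    have hj' : (triStep B p j x₀ v t)^[n] x₀ j = (triStep B p j x₀ v t')^[n] x₀ j :=
      congrFun h j
    rw [heqj t, heqj t'] at hj'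
    exact smul_left_injective ℝ hv0 (add_left_cancel hj')
  have hinj' : Function.Injective fun t : ℝ =>
      (⟨_, hXfixed t⟩ : {x | F x = x}) := fun t t' h => hinj (congrArg Subtype.val h)
  have : Countable {x | F x = x} := hC.to_subtype
  have : Countable ℝ := hinj'.countable
  exact not_countable this
end

section
/- Let Π be a group with a chain of subgroups 1 = Π_{n+1} ≤ Π_n ≤ ⋯ ≤ Π_1 ≤ Π, each Π_i normal in Π, such that Π/Π_1 is finite and each quotient Π_i/Π_{i+1} is free abelian of rank k_i, identified with ℤ^{k_i} via a fixed isomorphism j_i. Set K_i = k_1+⋯+k_i (with K_0 = 0) and h = K_n; identify ℝ^h with ℝ^{k_1}×⋯×ℝ^{k_n}, writing points as x = (x_1,…,x_n) with x_i ∈ ℝ^{k_i}. Let λ_i : Π → GL_{k_i}(ℤ) denote the action of Π by conjugation on Π_i/Π_{i+1} ≅ ℤ^{k_i}. Let ρ : Π → P(ℝ^h) be a group homomorphism into the group of polynomial diffeomorphisms of ℝ^h such that: (1) for every γ ∈ Π there exist polynomial maps q_i : ℝ^{K_{i−1}} → ℝ^{k_i} with ρ(γ)(x_1,…,x_n) =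 (λ_1(γ)x_1 + q_1, λ_2(γ)x_2 + q_2(x_1), …, λ_n(γ)x_n + q_n(x_1,…,x_{n−1})); and (2) if moreover γ ∈ Π_i and j_i(γΠ_{i+1}) = z ∈ ℤ^{k_i}, then ρ(γ)(x_1,…,x_n) = (x_1, …, x_{i−1}, x_i + z, λ_{i+1}(γ)x_{i+1} + q_{i+1}(x_1,…,x_i), …, λ_n(γ)x_n + q_n(x_1,…,x_{n−1})). Let φ : Π → Π be an endomorphism with φ(Π_i) ⊆ Π_i for every i ∈ {1,…,n}, and let G_i be the k_i×k_i integer matrix representing the endomorphism induced by φ on Π_i/Π_{i+1} ≅ ℤ^{k_i}. If p : ℝ^h → ℝ^h is a polynomial map satisfying p∘ρ(γ) = ρ(φ(γ))∘p for every γ ∈ Π, then for every i ∈ {1,…,n} there exists a polynomial map p_i : ℝ^{K_{i−1}} → ℝ^{k_i} (a constant when i = 1) such that the i-th component of p satisfies p(x)_i = G_i x_i + p_i(x_1,…,x_{i−1}) for every x ∈ ℝ^h. -/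
/-- `f` depends only on the coordinate blocks of index `< i`. -/
def DependsOnlyBelow {n : ℕ} {k : Fin n → ℕ} {l : ℕ} (i : Fin n)
    (f : ((j : Fin n) → Fin (k j) → ℝ) → (Fin l → ℝ)) : Prop :=
  ∀ x y, (∀ j, j < i → x j = y j) → f x = f y

lemma eval_aeval' {σ : Type*} (F : σ → Polynomial ℝ) (q : MvPolynomial σ ℝ) (t : ℝ) :
    Polynomial.eval t (MvPolynomial.aeval F q) = MvPolynomial.eval (fun s => (F s).eval t) q := by
  induction q using MvPolynomial.induction_on with
  | C a => simp
  | add p q hp hq => simp [hp, hq]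
  | mul_X p s hp => simp [hp]

lemma poly_periodic_const (g : Polynomial ℝ) (hper : ∀ t : ℝ, g.eval (t + 1) = g.eval t) :
    ∀ a b : ℝ, g.eval a = g.eval b := by
  have hnat : ∀ m : ℕ, g.eval (m : ℝ) = g.eval 0 := by
    intro m; induction m with
    | zero => simp
    | succ m ih => rw [Nat.cast_succ, hper, ih]
  have hd : g - Polynomial.C (g.eval 0) = 0 := by
    apply Polynomial.eq_zero_of_infinite_isRoot
    apply Set.Infinite.mono (s := Set.range (Nat.cast : ℕ → ℝ))
    · intro x hx
      obtain ⟨m, rfl⟩ := hx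
      simp [Polynomial.IsRoot, hnat]
    · exact Set.infinite_range_of_injective Nat.cast_injective
  have hg : g = Polynomial.C (g.eval 0) := sub_eq_zero.mp hd
  intro a b
  rw [hg]; simp

lemma coordConst {σ : Type*} [DecidableEq σ] (q : MvPolynomial σ ℝ) (s₀ : σ)
    (hper : ∀ y : σ → ℝ,
      MvPolynomial.eval (Function.update y s₀ (y s₀ + 1)) q = MvPolynomial.eval y q) :
    ∀ (y : σ → ℝ) (c : ℝ),
      MvPolynomial.eval (Function.update y s₀ c) q = MvPolynomial.eval y q := by
  intro y c
  set F : σ → Polynomial ℝ := fun s => if s = s₀ then Polynomial.X else Polynomial.C (y s) with hF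
  have hg : ∀ t : ℝ, Polynomial.eval t (MvPolynomial.aeval F q)
      = MvPolynomial.eval (Function.update y s₀ t) q := by
    intro t; rw [eval_aeval']
    have harg : (fun s => Polynomial.eval t (F s)) = Function.update y s₀ t := by
      funext s
      by_cases h : s = s₀
      · subst h; simp [hF]
      · simp [hF, h, Function.update_of_ne h]
    rw [harg]
  have hper' : ∀ t : ℝ, Polynomial.eval (t + 1) (MvPolynomial.aeval F q)
      = Polynomial.eval t (MvPolynomial.aeval F q) := by
    intro t; rw [hg, hg]
    have h2 := hper (Function.update y s₀ t)
    rwa [Function.update_self, Function.update_idem] at h2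
  have h3 := poly_periodic_const _ hper' c (y s₀)
  rw [hg, hg, Function.update_eq_self] at h3
  exact h3

lemma flat_updCoord {n : ℕ} {k : Fin n → ℕ} (x : (j : Fin n) → Fin (k j) → ℝ)
    (j₀ : Fin n) (c : Fin (k j₀)) (v : ℝ) :
    (fun s : (j : Fin n) × Fin (k j) =>
        Function.update x j₀ (Function.update (x j₀) c v) s.1 s.2)
      = Function.update (fun s : (j : Fin n) × Fin (k j) => x s.1 s.2) ⟨j₀, c⟩ v := by
  funext s
  obtain ⟨j, cc⟩ := s
  by_cases hj : j = j₀
  · subst hj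
    by_cases hc : cc = c
    · subst hc; simp
    · simp [Function.update, hc, Sigma.mk.inj_iff]
  · simp [Function.update, hj, Sigma.mk.inj_iff]

lemma chainC {n : ℕ} {k : Fin n → ℕ} {α : Type*}
    (f : ((j : Fin n) → Fin (k j) → ℝ) → α) :
    ∀ S : Finset (Fin n), (∀ j ∈ S, ∀ x v, f (Function.update x j v) = f x) →
      ∀ x y, (∀ j, j ∉ S → x j = y j) → f x = f y := by
  intro S
  induction S using Finset.induction_on with
  | empty =>
    intro _ x y h
    have : x = y := funext fun j => h j (Finset.notMem_empty j)
    rw [this]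
  | @insert a s ha ih =>
    intro hS x y hxy
    have h1 : f (Function.update x a (y a)) = f x :=
      hS a (Finset.mem_insert_self a s) x (y a)
    rw [← h1]
    apply ih (fun j hj => hS j (Finset.mem_insert_of_mem hj))
    intro j hj
    by_cases hja : j = a
    · subst hja; rw [Function.update_self]
    · rw [Function.update_of_ne hja]
      exact hxy j (by simp [Finset.mem_insert, hja, hj])

lemma blockIndep {n : ℕ} {k : Fin n → ℕ} {l : ℕ}
    (f : ((j : Fin n) → Fin (k j) → ℝ) → Fin l → ℝ) (hf : IsPolyMap f) (j₀ : Fin n)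
    (hper : ∀ (x) (z : Fin (k j₀) → ℤ),
      f (Function.update x j₀ (x j₀ + fun c => (z c : ℝ))) = f x) :
    ∀ x v, f (Function.update x j₀ v) = f x := by
  have hco : ∀ (c : Fin (k j₀)) (x) (v : ℝ),
      f (Function.update x j₀ (Function.update (x j₀) c v)) = f x := by
    intro c x v
    funext t
    obtain ⟨q, hq⟩ := hf t
    rw [hq, hq, flat_updCoord]
    refine coordConst q ⟨j₀, c⟩ ?_ _ v
    intro y
    set X : (j : Fin n) → Fin (k j) → ℝ := fun j c' => y ⟨j, c'⟩ with hX
    have h1 := congrFun (hper X (Pi.single c 1)) t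
    rw [hq, hq] at h1
    have h2 : X j₀ + (fun c' => ((Pi.single c 1 : Fin (k j₀) → ℤ) c' : ℝ))
        = Function.update (X j₀) c (X j₀ c + 1) := by
      funext c'
      by_cases h : c' = c
      · subst h; simp
      · simp [Pi.single_eq_of_ne h, Function.update_of_ne h]
    rw [h2, flat_updCoord] at h1
    exact h1
  intro x v
  have hchain : ∀ S : Finset (Fin (k j₀)), ∀ w, (∀ c ∉ S, w c = x j₀ c) →
      f (Function.update x j₀ w) = f x := by
    intro S
    induction S using Finset.induction_on with
    | empty =>
      intro w hw
      have : w = x j₀ := funext fun c => hw c (Finset.notMem_empty c)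
      rw [this, Function.update_eq_self]
    | @insert a s ha ih =>
      intro w hw
      set w' := Function.update w a (x j₀ a) with hw'
      set Y := Function.update x j₀ w' with hY
      have e0 : Function.update w' a (w a) = w := by
        rw [hw', Function.update_idem, Function.update_eq_self]
      have e1 : Function.update Y j₀ (Function.update (Y j₀) a (w a))
          = Function.update x j₀ w := by
        rw [hY, Function.update_self, Function.update_idem, e0]
      have e2 : f (Function.update Y j₀ (Function.update (Y j₀) a (w a))) = f Y :=
        hco a Y (w a)
      rw [e1] at e2
      rw [e2, hY]
      apply ih
      intro c hc
      by_cases hca : c = a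
      · subst hca; rw [hw', Function.update_self]
      · rw [hw', Function.update_of_ne hca]
        exact hw c (by simp [Finset.mem_insert, hca, hc])
  exact hchain Finset.univ v (fun c hc => absurd (Finset.mem_univ c) hc)




/-- Let `Π` be a group with a chain of normal subgroups
`1 = Π_{n+1} ≤ Π_n ≤ ⋯ ≤ Π_1 ≤ Π` (here `P i` is `Π_{i+1}`, so `P (last n) = 1`), with
`Π/Π_1` of finite index and each `Π_i/Π_{i+1}` identified with `ℤ^{k_i}` via an isomorphism
`e i`; let `lam i` be the resulting conjugation action of `Π` by integral matrices.  Let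
`ρ : Π → P(ℝ^h)`, `h = k_1+⋯+k_n`, be a homomorphism into the polynomial diffeomorphisms of
`ℝ^h = ℝ^{k_1}×⋯×ℝ^{k_n}` of canonical type, i.e. satisfying conditions (1) and (2) below.
Let `φ : Π → Π` be an endomorphism preserving each `Π_i`, inducing the integral matrix
`Gmat i` on `Π_i/Π_{i+1} ≅ ℤ^{k_i}`.  If `p : ℝ^h → ℝ^h` is a polynomial map with
`p ∘ ρ(γ) = ρ(φ(γ)) ∘ p` for all `γ`, then for every `i` there is a polynomial map `pi`
depending only on the coordinates of index `< i` with
`p(x)_i = Gmat_i x_i + pi(x_1,…,x_{i−1})` for all `x`. -/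
theorem canonical_type_homotopy_lift_form {G : Type*} [Group G] {n : ℕ} (hn : 0 < n)
    (P : Fin (n + 1) → Subgroup G)
    [hPnorm : ∀ i, (P i).Normal]
    (hPlast : P (Fin.last n) = ⊥)
    (hPchain : ∀ i : Fin n, P i.succ ≤ P i.castSucc)
    [hPfin : (P 0).FiniteIndex]
    (k : Fin n → ℕ) (hk : ∀ i, 0 < k i)
    [hsub : ∀ i : Fin n, ((P i.succ).subgroupOf (P i.castSucc)).Normal]
    (e : (i : Fin n) →
      (↥(P i.castSucc) ⧸ (P i.succ).subgroupOf (P i.castSucc)) ≃*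
        Multiplicative (Fin (k i) → ℤ))
    -- the conjugation action `λ_i : Π → GL_{k_i}(ℤ)` on `Π_i/Π_{i+1} ≅ ℤ^{k_i}`
    (lam : (i : Fin n) → G → Matrix (Fin (k i)) (Fin (k i)) ℤ)
    (hlam_unit : ∀ i γ, IsUnit (lam i γ))
    (hlam : ∀ (i : Fin n) (γ : G) (x : P i.castSucc),
      Multiplicative.toAdd (e i (QuotientGroup.mk
        (⟨γ * (x : G) * γ⁻¹, (hPnorm i.castSucc).conj_mem _ x.2 γ⟩ : P i.castSucc))) =
        (lam i γ).mulVec (Multiplicative.toAdd (e i (QuotientGroup.mk x))))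
    -- `ρ` is a homomorphism of `Π` into the polynomial diffeomorphisms of `ℝ^h`
    (ρ : G → (((j : Fin n) → Fin (k j) → ℝ) → ((j : Fin n) → Fin (k j) → ℝ)))
    (hρ_one : ρ 1 = id)
    (hρ_mul : ∀ γ δ : G, ρ (γ * δ) = ρ γ ∘ ρ δ)
    (hρ_bij : ∀ γ : G, Function.Bijective (ρ γ))
    -- condition (1): canonical triangular polynomial form of each `ρ(γ)`
    (hρ1 : ∀ γ : G,
      ∃ q : (i : Fin n) → (((j : Fin n) → Fin (k j) → ℝ) → (Fin (k i) → ℝ)),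
        (∀ i, IsPolyMap (q i) ∧ DependsOnlyBelow i (q i)) ∧
        ∀ x i, ρ γ x i = ((lam i γ).map (Int.cast : ℤ → ℝ)).mulVec (x i) + q i x)
    -- condition (2): the special form of `ρ(γ)` for `γ ∈ Π_i` with `j_i(γΠ_{i+1}) = z`
    (hρ2 : ∀ (i : Fin n) (γ : G) (hγ : γ ∈ P i.castSucc),
      (∀ x j, j < i → ρ γ x j = x j) ∧
      (∀ x, ρ γ x i = x i + fun t =>
        ((Multiplicative.toAdd (e i (QuotientGroup.mk (⟨γ, hγ⟩ : P i.castSucc)))) t : ℝ)) ∧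
      ∃ q : (j : Fin n) → (((j' : Fin n) → Fin (k j') → ℝ) → (Fin (k j) → ℝ)),
        (∀ j, IsPolyMap (q j) ∧ DependsOnlyBelow j (q j)) ∧
        ∀ x j, i < j → ρ γ x j = ((lam j γ).map (Int.cast : ℤ → ℝ)).mulVec (x j) + q j x)
    -- the endomorphism `φ` with `φ(Π_i) ⊆ Π_i`, inducing `Gmat i` on `Π_i/Π_{i+1} ≅ ℤ^{k_i}`
    (φ : G →* G) (hφ : ∀ i : Fin n, ∀ γ ∈ P i.castSucc, φ γ ∈ P i.castSucc)
    (Gmat : (i : Fin n) → Matrix (Fin (k i)) (Fin (k i)) ℤ)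
    (hGmat : ∀ (i : Fin n) (x : P i.castSucc),
      Multiplicative.toAdd (e i (QuotientGroup.mk
        (⟨φ (x : G), hφ i (x : G) x.2⟩ : P i.castSucc))) =
        (Gmat i).mulVec (Multiplicative.toAdd (e i (QuotientGroup.mk x))))
    -- `p` is a polynomial map satisfying `p ∘ ρ(γ) = ρ(φ(γ)) ∘ p`
    (p : ((j : Fin n) → Fin (k j) → ℝ) → ((j : Fin n) → Fin (k j) → ℝ))
    (hp_poly : ∀ i : Fin n, IsPolyMap (fun x => p x i))
    (hp : ∀ γ : G, p ∘ ρ γ = ρ (φ γ) ∘ p) :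
    ∀ i : Fin n, ∃ pi : ((j : Fin n) → Fin (k j) → ℝ) → (Fin (k i) → ℝ),
      IsPolyMap pi ∧ DependsOnlyBelow i pi ∧
      ∀ x, p x i = ((Gmat i).map (Int.cast : ℤ → ℝ)).mulVec (x i) + pi x := by
  intro i
  classical
  -- core: realize an integer translation in block `j` via the group action
  have core : ∀ j : Fin n,
      (∀ j' : Fin n, j < j' → ∀ x v, p (Function.update x j' v) i = p x i) →
      ∀ (z : Fin (k j) → ℤ) (x : (j' : Fin n) → Fin (k j') → ℝ),
      ∃ a : P j.castSucc,
        Multiplicative.toAdd (e j (QuotientGroup.mk a)) = z ∧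
        p (Function.update x j (x j + fun c => (z c : ℝ))) i = ρ (φ (a : G)) (p x) i := by
    intro j hind z x
    obtain ⟨a, ha⟩ := QuotientGroup.mk_surjective ((e j).symm (Multiplicative.ofAdd z))
    have hz : Multiplicative.toAdd (e j (QuotientGroup.mk a)) = z := by
      rw [ha, MulEquiv.apply_symm_apply]; rfl
    refine ⟨a, hz, ?_⟩
    have hfix := (hρ2 j (a : G) a.2).1
    have htr := (hρ2 j (a : G) a.2).2.1
    have hagree : ∀ t, t ∉ Finset.univ.filter (fun t => j < t) →
        Function.update x j (x j + fun c => (z c : ℝ)) t = ρ (a : G) x t := by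
      intro t ht
      simp only [Finset.mem_filter, Finset.mem_univ, true_and, not_lt] at ht
      rcases lt_or_eq_of_le ht with h | h
      · rw [Function.update_of_ne (ne_of_lt h), hfix x t h]
      · subst h
        rw [Function.update_self, htr x]
        congr 1
        funext c
        rw [show (⟨(a : G), a.2⟩ : P t.castSucc) = a from rfl, hz]
    have h1 : p (Function.update x j (x j + fun c => (z c : ℝ))) i = p (ρ (a : G) x) i :=
      chainC (fun y => p y i) (Finset.univ.filter (fun t => j < t))
        (fun j' hj' => hind j' (Finset.mem_filter.mp hj').2) _ _ hagree
    have h2 := congrFun (hp (a : G)) x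
    simp only [Function.comp_apply] at h2
    rw [h1, h2]
  have step_gt : ∀ j : Fin n, i < j →
      (∀ j' : Fin n, j < j' → ∀ x v, p (Function.update x j' v) i = p x i) →
      ∀ x (z : Fin (k j) → ℤ),
        p (Function.update x j (x j + fun c => (z c : ℝ))) i = p x i := by
    intro j hij hind x z
    obtain ⟨a, hz, hpe⟩ := core j hind z x
    rw [hpe]
    exact (hρ2 j (φ (a : G)) (hφ j (a : G) a.2)).1 (p x) i hij
  have indep_above : ∀ j : Fin n, i < j → ∀ x v, p (Function.update x j v) i = p x i := by
    have H : ∀ m : ℕ, ∀ j : Fin n, n ≤ m + j.val + 1 → i < j →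
        ∀ x v, p (Function.update x j v) i = p x i := by
      intro m
      induction m with
      | zero =>
        intro j hj hij
        have hind : ∀ j' : Fin n, j < j' → ∀ x v, p (Function.update x j' v) i = p x i := by
          intro j' hjj'
          exact absurd j'.isLt (by have := Fin.lt_def.mp hjj'; omega)
        exact blockIndep (fun x => p x i) (hp_poly i) j (step_gt j hij hind)
      | succ m ih =>
        intro j hj hij
        have hind : ∀ j' : Fin n, j < j' → ∀ x v, p (Function.update x j' v) i = p x i := by
          intro j' hjj'
          exact ih j' (by have := Fin.lt_def.mp hjj'; omega) (lt_trans hij hjj')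
        exact blockIndep (fun x => p x i) (hp_poly i) j (step_gt j hij hind)
    intro j
    exact H n j (by omega)
  have step_eq : ∀ x (z : Fin (k i) → ℤ),
      p (Function.update x i (x i + fun c => (z c : ℝ))) i
        = p x i + fun t => (((Gmat i).mulVec z t : ℤ) : ℝ) := by
    intro x z
    obtain ⟨a, hz, hpe⟩ := core i (fun j' hj' => indep_above j' hj') z x
    rw [hpe, (hρ2 i (φ (a : G)) (hφ i (a : G) a.2)).2.1 (p x)]
    congr 1
    funext t
    rw [hGmat i a, hz]
  set Gm := (Gmat i).map (Int.cast : ℤ → ℝ) with hGm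
  set F : ((j : Fin n) → Fin (k j) → ℝ) → Fin (k i) → ℝ :=
    fun x => p x i - Gm.mulVec (x i) with hFdef
  have hFpoly : IsPolyMap F := by
    intro t
    obtain ⟨q, hq⟩ := hp_poly i t
    refine ⟨q - ∑ c : Fin (k i),
      MvPolynomial.C ((Gmat i t c : ℝ)) * MvPolynomial.X ⟨i, c⟩, ?_⟩
    intro x
    have hmv : Gm.mulVec (x i) t = ∑ c : Fin (k i), (Gmat i t c : ℝ) * x i c := by
      simp [hGm, Matrix.mulVec, dotProduct, Matrix.map_apply]
    simp only [hFdef, Pi.sub_apply, map_sub, map_sum, map_mul,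
      MvPolynomial.eval_C, MvPolynomial.eval_X, hmv, hq x]
  have hcast : ∀ z : Fin (k i) → ℤ,
      Gm.mulVec (fun c => (z c : ℝ)) = fun t => (((Gmat i).mulVec z t : ℤ) : ℝ) := by
    intro z
    funext t
    simp [hGm, Matrix.mulVec, dotProduct, Matrix.map_apply]
  have hFper : ∀ x (z : Fin (k i) → ℤ),
      F (Function.update x i (x i + fun c => (z c : ℝ))) = F x := by
    intro x z
    show p (Function.update x i (x i + fun c => (z c : ℝ))) i
        - Gm.mulVec ((Function.update x i (x i + fun c => (z c : ℝ))) i) = _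
    rw [Function.update_self, step_eq x z, Matrix.mulVec_add, hcast z]
    show p x i + _ - (Gm.mulVec (x i) + _) = p x i - Gm.mulVec (x i)
    abel
  have hFindep_i : ∀ x v, F (Function.update x i v) = F x := blockIndep F hFpoly i hFper
  have hFindep_gt : ∀ j : Fin n, i < j → ∀ x v, F (Function.update x j v) = F x := by
    intro j hj x v
    show p (Function.update x j v) i - Gm.mulVec ((Function.update x j v) i)
        = p x i - Gm.mulVec (x i)
    rw [indep_above j hj, Function.update_of_ne (ne_of_lt hj)]
  refine ⟨F, hFpoly, ?_, ?_⟩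
  · intro x y hxy
    refine chainC F (Finset.univ.filter (fun j => i ≤ j)) ?_ x y ?_
    · intro j hjmem
      have hij : i ≤ j := (Finset.mem_filter.mp hjmem).2
      rcases lt_or_eq_of_le hij with h | h
      · exact hFindep_gt j h
      · subst h; exact hFindep_i
    · intro j hj
      simp only [Finset.mem_filter, Finset.mem_univ, true_and, not_le] at hj
      exact hxy j hj
  · intro x
    show p x i = Gm.mulVec (x i) + (p x i - Gm.mulVec (x i))
    abel
end
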